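/- arXiv:2005.10054 — 6 statements merged into one kernel-verified Lean document; each statement's English description precedes it below -/
import Mathlib

section
/- Let (a,p) be a truthful mechanism with finite approximation ratio ρ. If, on cost matrix A1, the mechanism allocates all the proper tasks n+1,…,2n−1 to machine 1, then ρ ≥ 1 + r + ∑_{i=1}^{n-2} a^{-i}. -/
open scoped ENNReal BigOperators

/-- A feasible allocation of `m` tasks to `n` machines: a 0-1 matrix (represented as a
`Bool`-valued matrix) in which every task is assigned to exactly one machine. -/
structure Alloc (n m : ℕ) where
  assign : Fin n → Fin m → Bool
  feasible : ∀ j : Fin m, ∃! i : Fin n, assign i j = true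

/-- The total processing cost incurred by machine `i` under allocation `A`
when her (true) cost row is `ti`. -/
noncomputable def machineCost {n m : ℕ} (A : Alloc n m) (ti : Fin m → ℝ≥0∞) (i : Fin n) :
    ℝ≥0∞ :=
  ∑ j : Fin m, if A.assign i j then ti j else 0

/-- A deterministic (direct-revelation) mechanism: an allocation rule together with a
payment rule. -/
structure Mechanism (n m : ℕ) where
  alloc : (Fin n → Fin m → ℝ≥0∞) → Alloc n m
  pay : (Fin n → Fin m → ℝ≥0∞) → Fin n → ℝ

/-- The (quasi-linear) utility of machine `i` when the reported cost matrix is `t` and her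
true cost row is `trueRow`: her payment minus her incurred true cost, in the extended reals. -/
noncomputable def utility {n m : ℕ} (M : Mechanism n m) (t : Fin n → Fin m → ℝ≥0∞)
    (trueRow : Fin m → ℝ≥0∞) (i : Fin n) : EReal :=
  (M.pay t i : EReal) - ((machineCost (M.alloc t) trueRow i : ℝ≥0∞) : EReal)

/-- Truthfulness: no machine can strictly increase her utility by misreporting her row,
whatever the (fixed) reports of the other machines are. -/
def Truthful {n m : ℕ} (M : Mechanism n m) : Prop :=
  ∀ (t : Fin n → Fin m → ℝ≥0∞) (i : Fin n) (ti' : Fin m → ℝ≥0∞),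
    utility M (Function.update t i ti') (t i) i ≤ utility M t (t i) i

/-- The makespan of allocation `A` on cost matrix `t`. -/
noncomputable def makespan {n m : ℕ} (A : Alloc n m) (t : Fin n → Fin m → ℝ≥0∞) : ℝ≥0∞ :=
  ⨆ i : Fin n, machineCost A (t i) i

/-- The optimal makespan on cost matrix `t`. -/
noncomputable def optMakespan (n m : ℕ) (t : Fin n → Fin m → ℝ≥0∞) : ℝ≥0∞ :=
  ⨅ A : Alloc n m, makespan A t

/-- The mechanism `M` has approximation ratio (at most) `ρ`. -/
def ApproxRatioLE {n m : ℕ} (M : Mechanism n m) (ρ : ℝ) : Prop :=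
  1 ≤ ρ ∧ ∀ t : Fin n → Fin m → ℝ≥0∞,
    makespan (M.alloc t) t ≤ ENNReal.ofReal ρ * optMakespan n m t

/-- The cost matrix `A0` on `n` machines and `2n-1` tasks. Tasks with index `< n` (0-based)
are the dummy tasks: machine `i` has cost `0` on dummy task `i` and `∞` on the other dummy
tasks. Tasks with index `n, n+1, …, 2n-2` (0-based) are the proper tasks `n+1, …, 2n-1` of
the paper: machines `1` and `2` (indices `0`, `1`) have cost `1` on task `n+1` (index `n`)
and cost `a^{-(j-2)}` on task `n+j` (index `n+j-1`) for `j = 2,…,n-1`; machine `i`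
(index `i-1 ≥ 2`), for `3 ≤ i ≤ n`, has cost `a^{-(i-3)}` on task `n+i-1` (index `n+i-2`)
and `∞` on every other proper task. -/
noncomputable def A0 (n : ℕ) (a : ℝ) : Fin n → Fin (2 * n - 1) → ℝ≥0∞ := fun i j =>
  if (j : ℕ) < n then
    (if (j : ℕ) = (i : ℕ) then 0 else ⊤)
  else if (i : ℕ) ≤ 1 then
    (if (j : ℕ) = n then 1 else ENNReal.ofReal (a⁻¹ ^ ((j : ℕ) - n - 1)))
  else
    (if (j : ℕ) = n + (i : ℕ) - 1 then ENNReal.ofReal (a⁻¹ ^ ((j : ℕ) - n - 1)) else ⊤)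

/-- The cost matrix `A1`: identical to `A0` except for machine `1`'s (index `0`'s) costs on
the proper tasks, which become `r` on task `n+1` (index `n`) and `a^{-(j-1)}` on task `n+j`
(index `n+j-1`) for `j = 2,…,n-1`. -/
noncomputable def A1 (n : ℕ) (r a : ℝ) : Fin n → Fin (2 * n - 1) → ℝ≥0∞ := fun i j =>
  if (i : ℕ) = 0 ∧ n ≤ (j : ℕ) then
    (if (j : ℕ) = n then ENNReal.ofReal r else ENNReal.ofReal (a⁻¹ ^ ((j : ℕ) - n)))
  else A0 n a i j


namespace CaseOneAux

/-- canonical allocation: dummy task `j < n` to machine `j`; proper task `j ≥ n` to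
machine `j - n + 1`. -/
def canon (n : ℕ) (hn : 3 ≤ n) : Alloc n (2 * n - 1) where
  assign i j := decide ((i : ℕ) = if (j : ℕ) < n then (j : ℕ) else (j : ℕ) - n + 1)
  feasible j := by
    have hj := j.isLt
    have htgt : (if (j : ℕ) < n then (j : ℕ) else (j : ℕ) - n + 1) < n := by
      split <;> omega
    refine ⟨⟨_, htgt⟩, by simp, ?_⟩
    intro i hi
    simp only [decide_eq_true_eq] at hi
    exact Fin.ext hi

def jstar (n : ℕ) (hn : 3 ≤ n) (i : Fin n) : Fin (2 * n - 1) :=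
  if (i : ℕ) = 0 then ⟨0, by omega⟩ else ⟨n + (i : ℕ) - 1, by have := i.isLt; omega⟩

lemma canon_makespan_le {n : ℕ} (hn : 3 ≤ n) (T : Fin n → Fin (2 * n - 1) → ℝ≥0∞)
    (h0 : T ⟨0, lt_of_lt_of_le (by norm_num) hn⟩ ⟨0, by omega⟩ ≤ 1)
    (hdum : ∀ i : Fin n, 1 ≤ (i : ℕ) → T i ⟨(i : ℕ), by have := i.isLt; omega⟩ = 0)
    (hstar : ∀ i : Fin n, 1 ≤ (i : ℕ) → T i ⟨n + (i : ℕ) - 1, by have := i.isLt; omega⟩ ≤ 1) :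
    makespan (canon n hn) T ≤ 1 := by
  apply iSup_le
  intro i
  have key : ∀ j : Fin (2 * n - 1),
      (if (canon n hn).assign i j then T i j else 0) ≤
        (if j = jstar n hn i then (1 : ℝ≥0∞) else 0) := by
    intro j
    by_cases hassign : (canon n hn).assign i j = true
    · have hprop : (i : ℕ) = (if (j : ℕ) < n then (j : ℕ) else (j : ℕ) - n + 1) := by
        simpa [canon] using hassign
      rw [if_pos hassign]
      by_cases hjn : (j : ℕ) < n
      · rw [if_pos hjn] at hprop
        by_cases hi0 : (i : ℕ) = 0
        · have hj0 : j = jstar n hn i := by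
            simp only [jstar, if_pos hi0]
            exact Fin.ext (show (j : ℕ) = 0 by omega)
          rw [if_pos hj0]
          have hieq : i = ⟨0, by omega⟩ := Fin.ext hi0
          have hjeq : j = ⟨0, by omega⟩ := Fin.ext (show (j : ℕ) = 0 by omega)
          rw [hieq, hjeq]; exact h0
        · have h1i : 1 ≤ (i : ℕ) := by omega
          have hjeq : j = ⟨(i : ℕ), by have := i.isLt; omega⟩ := Fin.ext (by simpa using hprop.symm)
          rw [hjeq, hdum i h1i]
          split <;> simp
      · rw [if_neg hjn] at hprop
        have hjge : n ≤ (j : ℕ) := by omega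
        have h1i : 1 ≤ (i : ℕ) := by omega
        have hj0 : j = jstar n hn i := by
          simp only [jstar, if_neg (by omega : ¬ (i : ℕ) = 0)]
          exact Fin.ext (show (j : ℕ) = n + (i : ℕ) - 1 by omega)
        rw [if_pos hj0]
        have hjeq : j = ⟨n + (i : ℕ) - 1, by have := i.isLt; omega⟩ :=
          Fin.ext (show (j : ℕ) = n + (i : ℕ) - 1 by omega)
        rw [hjeq]; exact hstar i h1i
    · rw [if_neg hassign]
      exact zero_le
  calc machineCost (canon n hn) (T i) i
      ≤ ∑ j : Fin (2 * n - 1), (if j = jstar n hn i then (1 : ℝ≥0∞) else 0) :=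
        Finset.sum_le_sum (fun j _ => key j)
    _ = 1 := by rw [Finset.sum_ite_eq' Finset.univ (jstar n hn i) (fun _ => (1 : ℝ≥0∞))]
                simp

lemma ereal_sub_le {p q : ℝ} {c d : ℝ≥0∞} (hc : c ≠ ⊤) (hd : d ≠ ⊤)
    (h : (p : EReal) - (c : ℝ≥0∞) ≤ (q : EReal) - (d : ℝ≥0∞)) :
    p - c.toReal ≤ q - d.toReal := by
  have hc' : ((c.toReal : ℝ) : EReal) = ((c : ℝ≥0∞) : EReal) := by
    rw [← EReal.toReal_coe_ennreal]
    exact EReal.coe_toReal (by simpa using hc) (EReal.coe_ennreal_ne_bot _)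
  have hd' : ((d.toReal : ℝ) : EReal) = ((d : ℝ≥0∞) : EReal) := by
    rw [← EReal.toReal_coe_ennreal]
    exact EReal.coe_toReal (by simpa using hd) (EReal.coe_ennreal_ne_bot _)
  rw [← hc', ← hd', ← EReal.coe_sub, ← EReal.coe_sub] at h
  exact_mod_cast h

lemma sum_tR {n : ℕ} (hn : 3 ≤ n) (r a : ℝ) :
    ∑ j ∈ Finset.univ.filter (fun j : Fin (2 * n - 1) => n ≤ (j : ℕ)),
      (if (j : ℕ) = n then r else a⁻¹ ^ ((j : ℕ) - n)) =
    r + ∑ i ∈ Finset.Icc 1 (n - 2), a⁻¹ ^ i := by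
  have step1 : ∑ j ∈ Finset.univ.filter (fun j : Fin (2 * n - 1) => n ≤ (j : ℕ)),
      (if (j : ℕ) = n then r else a⁻¹ ^ ((j : ℕ) - n)) =
      ∑ k ∈ Finset.range (n - 1), (if k = 0 then r else a⁻¹ ^ k) := by
    refine Finset.sum_nbij' (fun j => (j : ℕ) - n)
      (fun k => ⟨n + min k (n - 2), by omega⟩) ?_ ?_ ?_ ?_ ?_
    · intro j hj
      simp only [Finset.mem_filter, Finset.mem_univ, true_and] at hj
      have := j.isLt
      simp only [Finset.mem_range]
      omega
    · intro k hk
      simp only [Finset.mem_range] at hk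
      simp only [Finset.mem_filter, Finset.mem_univ, true_and]
      omega
    · intro j hj
      simp only [Finset.mem_filter, Finset.mem_univ, true_and] at hj
      have := j.isLt
      apply Fin.ext
      show n + min ((j : ℕ) - n) (n - 2) = (j : ℕ)
      omega
    · intro k hk
      simp only [Finset.mem_range] at hk
      show (n + min k (n - 2)) - n = k
      omega
    · intro j hj
      simp only [Finset.mem_filter, Finset.mem_univ, true_and] at hj
      show _ = if (j : ℕ) - n = 0 then r else a⁻¹ ^ ((j : ℕ) - n)
      by_cases h : (j : ℕ) = n
      · rw [if_pos h, if_pos (by omega : (j : ℕ) - n = 0)]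
      · rw [if_neg h, if_neg (by omega : ¬ (j : ℕ) - n = 0)]
  rw [step1]
  have h2 : n - 1 = (n - 2) + 1 := by omega
  rw [h2, Finset.sum_range_succ']
  have h3 : ∀ k ∈ Finset.range (n - 2), (if k + 1 = 0 then r else a⁻¹ ^ (k + 1)) = a⁻¹ ^ (k + 1) :=
    fun k _ => if_neg (Nat.succ_ne_zero k)
  rw [Finset.sum_congr rfl h3, if_pos rfl]
  have h4 : Finset.Icc 1 (n - 2) = Finset.Ico 1 ((n - 2) + 1) := by rw [Finset.Ico_add_one_right_eq_Icc]
  rw [h4, Finset.sum_Ico_eq_sum_range]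
  have h5 : (n - 2 + 1) - 1 = n - 2 := by omega
  rw [h5, add_comm]
  exact congrArg _ (Finset.sum_congr rfl (fun x _ => by rw [add_comm 1 x]))

end CaseOneAux


/-- **Case 1.**  Let `(a,p)` be a truthful mechanism with finite approximation
ratio `ρ`.  If, on cost matrix `A1`, the mechanism allocates all the proper tasks
`n+1,…,2n-1` (0-based indices `n,…,2n-2`) to machine `1` (index `0`), then
`ρ ≥ 1 + r + ∑_{i=1}^{n-2} a^{-i}`. -/
theorem case_one_lower_bound (n : ℕ) (hn : 3 ≤ n) (r a : ℝ)
    (hr0 : 0 < r) (hr1 : r < 1) (ha : 1 < a)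
    (M : Mechanism n (2 * n - 1)) (hM : Truthful M)
    (ρ : ℝ) (hρ : ApproxRatioLE M ρ)
    (hall : ∀ j : Fin (2 * n - 1), n ≤ (j : ℕ) →
      (M.alloc (A1 n r a)).assign ⟨0, by omega⟩ j = true) :
    1 + r + ∑ i ∈ Finset.Icc 1 (n - 2), a⁻¹ ^ i ≤ ρ := by
  classical
  obtain ⟨hρ1, hρ2⟩ := hρ
  have hm : 0 < 2 * n - 1 := by omega
  have ha0 : (0:ℝ) < a := by linarith
  have hainv1 : a⁻¹ ≤ 1 := by
    rw [inv_eq_one_div, div_le_one ha0]; linarith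
  have hainv0 : (0:ℝ) ≤ a⁻¹ := by positivity
  set i0 : Fin n := ⟨0, by omega⟩ with hi0def
  set d0 : Fin (2 * n - 1) := ⟨0, hm⟩ with hd0def
  have hi0v : (i0 : ℕ) = 0 := rfl
  have hd0v : (d0 : ℕ) = 0 := rfl
  -- real task values of machine 0's row
  set tR : Fin (2 * n - 1) → ℝ := fun j => if (j : ℕ) = n then r else a⁻¹ ^ ((j : ℕ) - n)
    with htRdef
  have htR0 : ∀ j, 0 ≤ tR j := by
    intro j; simp only [htRdef]; split
    · linarith
    · positivity
  set P : Finset (Fin (2 * n - 1)) := Finset.univ.filter (fun j => n ≤ (j : ℕ)) with hPdef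
  have hPmem : ∀ j, j ∈ P → n ≤ (j : ℕ) := by
    intro j hj
    simpa [hPdef] using hj
  set SR : ℝ := r + ∑ i ∈ Finset.Icc 1 (n - 2), a⁻¹ ^ i with hSRdef
  have hsumtR : ∑ j ∈ P, tR j = SR := CaseOneAux.sum_tR hn r a
  have hSRpos : 0 < SR := by
    have h1 : 0 ≤ ∑ i ∈ Finset.Icc 1 (n-2), a⁻¹ ^ i :=
      Finset.sum_nonneg (fun i _ => by positivity)
    rw [hSRdef]; linarith
  set T1 := A1 n r a with hT1def
  -- value lemmas for T1
  have hT1own : ∀ (i : Fin n) (j : Fin (2 * n - 1)), (j : ℕ) < n → (j : ℕ) = (i : ℕ) →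
      T1 i j = 0 := by
    intro i j h1 h2
    rw [hT1def]
    unfold A1 A0
    rw [if_neg (by omega), if_pos h1, if_pos h2]
  have hT1topDummy : ∀ (i : Fin n) (j : Fin (2 * n - 1)), (j : ℕ) < n → (j : ℕ) ≠ (i : ℕ) →
      T1 i j = ⊤ := by
    intro i j h1 h2
    rw [hT1def]
    unfold A1 A0
    rw [if_neg (by omega), if_pos h1, if_neg h2]
  have hT1star : ∀ (i : Fin n) (j : Fin (2 * n - 1)), 1 ≤ (i : ℕ) →
      (j : ℕ) = n + (i : ℕ) - 1 → T1 i j ≤ 1 := by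
    intro i j h1 h2
    rw [hT1def]
    unfold A1 A0
    rw [if_neg (by omega), if_neg (by omega)]
    by_cases hi1 : (i : ℕ) ≤ 1
    · rw [if_pos hi1, if_pos (by omega)]
    · rw [if_neg hi1, if_pos (by omega)]
      rw [show (1 : ℝ≥0∞) = ENNReal.ofReal (1:ℝ) by simp]
      exact ENNReal.ofReal_le_ofReal (pow_le_one₀ hainv0 hainv1)
  have hxP : ∀ j : Fin (2 * n - 1), n ≤ (j : ℕ) → T1 i0 j = ENNReal.ofReal (tR j) := by
    intro j hj
    rw [hT1def]
    unfold A1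
    rw [if_pos (⟨hi0v, hj⟩ : (i0 : ℕ) = 0 ∧ n ≤ (j : ℕ))]
    simp only [htRdef]
    by_cases h : (j : ℕ) = n
    · rw [if_pos h, if_pos h]
    · rw [if_neg h, if_neg h]
  have hxd0 : T1 i0 d0 = 0 := hT1own i0 d0 (by omega) rfl
  -- optimal makespan at T1 is at most 1 (canonical allocation)
  have hcanonT1 : optMakespan n (2 * n - 1) T1 ≤ 1 := by
    refine le_trans (iInf_le _ (CaseOneAux.canon n hn)) ?_
    refine CaseOneAux.canon_makespan_le hn T1 ?_ ?_ ?_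
    · exact le_of_eq_of_le hxd0 zero_le
    · intro i hi
      exact hT1own i ⟨(i : ℕ), by have := i.isLt; omega⟩ (by exact i.isLt) rfl
    · intro i hi
      exact hT1star i ⟨n + (i : ℕ) - 1, by have := i.isLt; omega⟩ hi rfl
  -- consequences of the approximation ratio
  have hratio : ∀ T : Fin n → Fin (2 * n - 1) → ℝ≥0∞, optMakespan n (2 * n - 1) T ≤ 1 →
      makespan (M.alloc T) T ≤ ENNReal.ofReal ρ := by
    intro T hopt
    refine le_trans (hρ2 T) ?_
    calc ENNReal.ofReal ρ * optMakespan n (2 * n - 1) T ≤ ENNReal.ofReal ρ * 1 :=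
          mul_le_mul_right hopt _
      _ = ENNReal.ofReal ρ := mul_one _
  have hnotop : ∀ T : Fin n → Fin (2 * n - 1) → ℝ≥0∞, makespan (M.alloc T) T ≠ ⊤ →
      ∀ (i : Fin n) (j : Fin (2 * n - 1)), (M.alloc T).assign i j = true → T i j ≠ ⊤ := by
    intro T hne i j hij htop
    apply hne
    have h1 : (⊤ : ℝ≥0∞) ≤ machineCost (M.alloc T) (T i) i := by
      rw [← htop]
      calc T i j = (if (M.alloc T).assign i j then T i j else 0) := by rw [if_pos hij]
        _ ≤ ∑ j' : Fin (2 * n - 1), (if (M.alloc T).assign i j' then T i j' else 0) :=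
            Finset.single_le_sum (f := fun j' => if (M.alloc T).assign i j' then T i j' else 0)
              (fun _ _ => zero_le) (Finset.mem_univ j)
        _ = machineCost (M.alloc T) (T i) i := rfl
    have h2 : machineCost (M.alloc T) (T i) i ≤ makespan (M.alloc T) T :=
      le_iSup (fun i' => machineCost (M.alloc T) (T i') i') i
    exact top_le_iff.mp (h1.trans h2)
  have hmsne1 : makespan (M.alloc T1) T1 ≠ ⊤ :=
    ne_top_of_le_ne_top ENNReal.ofReal_ne_top (hratio T1 hcanonT1)
  -- machine 0 gets no foreign dummy task, and gets its own dummy, at T1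
  have hnd1 : ∀ j : Fin (2 * n - 1), (j : ℕ) ≠ 0 → (j : ℕ) < n →
      ¬ ((M.alloc T1).assign i0 j = true) := by
    intro j h1 h2 hasn
    exact (hnotop T1 hmsne1 i0 j hasn) (hT1topDummy i0 j h2 (by omega))
  have hd01 : (M.alloc T1).assign i0 d0 = true := by
    obtain ⟨i, hi, -⟩ := (M.alloc T1).feasible d0
    by_cases h : i = i0
    · rwa [h] at hi
    · exfalso
      have hne : (d0 : ℕ) ≠ (i : ℕ) := by
        intro hv; exact h (Fin.ext (by omega)).symm
      exact (hnotop T1 hmsne1 i d0 hi) (hT1topDummy i d0 (by omega) hne)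
  have hallP : ∀ j : Fin (2 * n - 1), n ≤ (j : ℕ) → (M.alloc T1).assign i0 j = true := by
    intro j hj; exact hall j hj
  -- machine-0 cost splitting: dummy 0 plus the proper part
  have hsplit : ∀ A : Alloc n (2 * n - 1),
      (∀ j : Fin (2 * n - 1), (j : ℕ) ≠ 0 → (j : ℕ) < n → ¬ (A.assign i0 j = true)) →
      A.assign i0 d0 = true → ∀ row : Fin (2 * n - 1) → ℝ≥0∞,
      machineCost A row i0 = row d0 + ∑ j ∈ P, (if A.assign i0 j then row j else 0) := by
    intro A hnd hd row
    have hu : machineCost A row i0 =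
        (∑ j ∈ P, (if A.assign i0 j then row j else 0)) +
        ∑ j ∈ Finset.univ.filter (fun j : Fin (2 * n - 1) => ¬ n ≤ (j : ℕ)),
          (if A.assign i0 j then row j else 0) := by
      rw [hPdef]
      exact (Finset.sum_filter_add_sum_filter_not Finset.univ _ _).symm
    rw [hu]
    have h2 : ∑ j ∈ Finset.univ.filter (fun j : Fin (2 * n - 1) => ¬ n ≤ (j : ℕ)),
        (if A.assign i0 j then row j else 0) = row d0 := by
      rw [Finset.sum_eq_single_of_mem d0
        (by simp only [Finset.mem_filter, Finset.mem_univ, true_and, hd0v]; omega)]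
      · rw [if_pos hd]
      · intro j hj hne
        have hjlt : (j : ℕ) < n := by
          have := Finset.mem_filter.mp hj
          omega
        have hj0 : (j : ℕ) ≠ 0 := by
          intro hv; exact hne (Fin.ext (by omega))
        rw [if_neg (hnd j hj0 hjlt)]
    rw [h2, add_comm]
  have hSRE : ∑ j ∈ P, T1 i0 j = ENNReal.ofReal SR := by
    rw [Finset.sum_congr rfl (fun j hj => hxP j (hPmem j hj))]
    rw [← hsumtR]
    exact (ENNReal.ofReal_sum_of_nonneg (fun j _ => htR0 j)).symm
  -- ============ the key ε-step ============
  have key : ∀ ε : ℝ, 0 < ε → ε < 1 → 1 + (1 - ε) * SR ≤ ρ := by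
    intro ε hε0 hε1
    have h1ε : (0:ℝ) ≤ 1 - ε := by linarith
    set x' : Fin (2 * n - 1) → ℝ≥0∞ := fun j =>
      if (j : ℕ) < n then (if (j : ℕ) = 0 then 1 else ⊤)
      else ENNReal.ofReal ((1 - ε) * tR j) with hx'def
    have hx'own : ∀ j : Fin (2 * n - 1), (j : ℕ) < n → (j : ℕ) = 0 → x' j = 1 := by
      intro j h1 h2
      simp only [hx'def]
      rw [if_pos h1, if_pos h2]
    have hx'd0 : x' d0 = 1 := hx'own d0 (by omega) rfl
    have hx'dum : ∀ j : Fin (2 * n - 1), (j : ℕ) ≠ 0 → (j : ℕ) < n → x' j = ⊤ := by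
      intro j h1 h2
      simp only [hx'def]
      rw [if_pos h2, if_neg h1]
    have hx'P : ∀ j : Fin (2 * n - 1), n ≤ (j : ℕ) →
        x' j = ENNReal.ofReal (1 - ε) * ENNReal.ofReal (tR j) := by
      intro j hj
      simp only [hx'def]
      rw [if_neg (by omega), ENNReal.ofReal_mul h1ε]
    set T2 := Function.update T1 i0 x' with hT2def
    have hT2row : T2 i0 = x' := Function.update_self i0 x' T1
    have hT2other : ∀ i : Fin n, i ≠ i0 → T2 i = T1 i := by
      intro i hi
      rw [hT2def]
      exact Function.update_of_ne hi x' T1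
    have hcanonT2 : optMakespan n (2 * n - 1) T2 ≤ 1 := by
      refine le_trans (iInf_le _ (CaseOneAux.canon n hn)) ?_
      refine CaseOneAux.canon_makespan_le hn T2 ?_ ?_ ?_
      · have h : T2 i0 d0 = 1 := by rw [hT2row, hx'd0]
        exact le_of_eq h
      · intro i hi
        have hne : i ≠ i0 := by
          intro h; rw [h, hi0v] at hi; omega
        rw [hT2other i hne]
        exact hT1own i ⟨(i : ℕ), by have := i.isLt; omega⟩ (by exact i.isLt) rfl
      · intro i hi
        have hne : i ≠ i0 := by
          intro h; rw [h, hi0v] at hi; omega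
        rw [hT2other i hne]
        exact hT1star i ⟨n + (i : ℕ) - 1, by have := i.isLt; omega⟩ hi rfl
    have hmsne2 : makespan (M.alloc T2) T2 ≠ ⊤ :=
      ne_top_of_le_ne_top ENNReal.ofReal_ne_top (hratio T2 hcanonT2)
    have hnd2 : ∀ j : Fin (2 * n - 1), (j : ℕ) ≠ 0 → (j : ℕ) < n →
        ¬ ((M.alloc T2).assign i0 j = true) := by
      intro j h1 h2 hasn
      refine (hnotop T2 hmsne2 i0 j hasn) ?_
      rw [hT2row]; exact hx'dum j h1 h2
    have hd02 : (M.alloc T2).assign i0 d0 = true := by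
      obtain ⟨i, hi, -⟩ := (M.alloc T2).feasible d0
      by_cases h : i = i0
      · rwa [h] at hi
      · exfalso
        have hne : (d0 : ℕ) ≠ (i : ℕ) := by
          intro hv; exact h (Fin.ext (by omega)).symm
        refine (hnotop T2 hmsne2 i d0 hi) ?_
        rw [hT2other i h]
        exact hT1topDummy i d0 (by omega) hne
    -- the four machine-0 costs
    set s1 := M.alloc T1 with hs1def
    set s2 := M.alloc T2 with hs2def
    set σE : ℝ≥0∞ := ∑ j ∈ P, (if s2.assign i0 j then T1 i0 j else 0) with hσEdef
    have hc1 : machineCost s1 (T1 i0) i0 = ENNReal.ofReal SR := by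
      have h : ∑ j ∈ P, (if s1.assign i0 j then T1 i0 j else 0) = ∑ j ∈ P, T1 i0 j :=
        Finset.sum_congr rfl (fun j hj => if_pos (hallP j (hPmem j hj)))
      rw [hsplit s1 hnd1 hd01, hxd0, zero_add, h]
      exact hSRE
    have hc2 : machineCost s1 x' i0 = 1 + ENNReal.ofReal (1 - ε) * ENNReal.ofReal SR := by
      have h : ∑ j ∈ P, (if s1.assign i0 j then x' j else 0) =
          ENNReal.ofReal (1 - ε) * ENNReal.ofReal SR := by
        rw [← hSRE, Finset.mul_sum]
        refine Finset.sum_congr rfl (fun j hj => ?_)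
        rw [if_pos (hallP j (hPmem j hj)), hx'P j (hPmem j hj), hxP j (hPmem j hj)]
      rw [hsplit s1 hnd1 hd01, hx'd0, h]
    have hc3 : machineCost s2 (T1 i0) i0 = σE := by
      rw [hsplit s2 hnd2 hd02, hxd0, zero_add]
    have hc4 : machineCost s2 x' i0 = 1 + ENNReal.ofReal (1 - ε) * σE := by
      have h : ∑ j ∈ P, (if s2.assign i0 j then x' j else 0) =
          ENNReal.ofReal (1 - ε) * σE := by
        rw [hσEdef, Finset.mul_sum]
        refine Finset.sum_congr rfl (fun j hj => ?_)
        by_cases hasn : s2.assign i0 j = true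
        · rw [if_pos hasn, if_pos hasn, hx'P j (hPmem j hj), hxP j (hPmem j hj)]
        · rw [if_neg hasn, if_neg hasn, mul_zero]
      rw [hsplit s2 hnd2 hd02, hx'd0, h]
    have hσle : σE ≤ ENNReal.ofReal SR := by
      rw [← hSRE, hσEdef]
      refine Finset.sum_le_sum (fun j hj => ?_)
      split
      · exact le_rfl
      · exact zero_le
    have hσfin : σE ≠ ⊤ := ne_top_of_le_ne_top ENNReal.ofReal_ne_top hσle
    have hc2fin : (1 + ENNReal.ofReal (1 - ε) * ENNReal.ofReal SR) ≠ ⊤ :=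
      ENNReal.add_ne_top.mpr ⟨ENNReal.one_ne_top,
        ENNReal.mul_ne_top ENNReal.ofReal_ne_top ENNReal.ofReal_ne_top⟩
    have hc4fin : (1 + ENNReal.ofReal (1 - ε) * σE) ≠ ⊤ :=
      ENNReal.add_ne_top.mpr ⟨ENNReal.one_ne_top,
        ENNReal.mul_ne_top ENNReal.ofReal_ne_top hσfin⟩
    -- truthfulness, both directions
    have hI := hM T1 i0 x'
    rw [show Function.update T1 i0 x' = T2 from hT2def.symm] at hI
    have hII := hM T2 i0 (T1 i0)
    have hupd : Function.update T2 i0 (T1 i0) = T1 := by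
      rw [hT2def, Function.update_idem, Function.update_eq_self]
    rw [hupd, hT2row] at hII
    simp only [utility] at hI hII
    rw [← hs1def, ← hs2def] at hI hII
    rw [hc1, hc3] at hI
    rw [hc2, hc4] at hII
    have hIr := CaseOneAux.ereal_sub_le hσfin ENNReal.ofReal_ne_top hI
    have hIIr := CaseOneAux.ereal_sub_le hc2fin hc4fin hII
    -- convert to real values
    set σr : ℝ := σE.toReal with hσrdef
    have htr1 : (ENNReal.ofReal SR).toReal = SR := ENNReal.toReal_ofReal hSRpos.le
    have htr2 : (1 + ENNReal.ofReal (1 - ε) * ENNReal.ofReal SR).toReal = 1 + (1 - ε) * SR := by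
      rw [ENNReal.toReal_add ENNReal.one_ne_top
        (ENNReal.mul_ne_top ENNReal.ofReal_ne_top ENNReal.ofReal_ne_top)]
      rw [ENNReal.toReal_mul, ENNReal.toReal_one, ENNReal.toReal_ofReal h1ε,
        ENNReal.toReal_ofReal hSRpos.le]
    have htr4 : (1 + ENNReal.ofReal (1 - ε) * σE).toReal = 1 + (1 - ε) * σr := by
      rw [ENNReal.toReal_add ENNReal.one_ne_top
        (ENNReal.mul_ne_top ENNReal.ofReal_ne_top hσfin)]
      rw [ENNReal.toReal_mul, ENNReal.toReal_one, ENNReal.toReal_ofReal h1ε, hσrdef]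
    rw [htr1] at hIr
    rw [htr2, htr4] at hIIr
    -- deduce SR ≤ σr
    have hexp1 : (1 - ε) * SR = SR - ε * SR := by ring
    have hexp2 : (1 - ε) * σr = σr - ε * σr := by ring
    have hεle : ε * SR ≤ ε * σr := by linarith
    have hSRσ : SR ≤ σr := le_of_mul_le_mul_left hεle hε0
    -- machine 0's load at T2 bounds the makespan
    have hload : 1 + ENNReal.ofReal (1 - ε) * σE ≤ ENNReal.ofReal ρ := by
      rw [← hc4]
      refine le_trans ?_ (hratio T2 hcanonT2)
      have h : machineCost s2 x' i0 = machineCost (M.alloc T2) (T2 i0) i0 := by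
        rw [hT2row, hs2def]
      rw [h]
      exact le_iSup (fun i => machineCost (M.alloc T2) (T2 i) i) i0
    have hloadr : 1 + (1 - ε) * σr ≤ ρ := by
      have h := (ENNReal.toReal_le_toReal hc4fin ENNReal.ofReal_ne_top).mpr hload
      rwa [htr4, ENNReal.toReal_ofReal (le_trans zero_le_one hρ1)] at h
    nlinarith [mul_le_mul_of_nonneg_left hSRσ h1ε]
  -- ============ conclude ============
  by_contra hcon
  push_neg at hcon
  have hρSR : ρ < 1 + SR := by rw [hSRdef]; linarith
  have hSRne : SR ≠ 0 := ne_of_gt hSRpos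
  set ε : ℝ := (1 + SR - ρ) / (2 * SR) with hεdef
  have hε0 : 0 < ε := div_pos (by linarith) (by linarith)
  have hε12 : ε ≤ 1 / 2 := by
    rw [hεdef, div_le_iff₀ (by linarith : (0:ℝ) < 2 * SR)]
    nlinarith
  have hk := key ε hε0 (by linarith)
  have hεSR : ε * SR = (1 + SR - ρ) / 2 := by
    rw [hεdef]
    field_simp
  have hexp : (1 - ε) * SR = SR - ε * SR := by ring
  clear_value ε SR
  have hfin : 1 + SR ≤ ρ := by linarith [hk, hexp, hεSR]
  linarith [hfin, hρSR]
end

section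
/- For n ∈ {3,4,5}, the supremum of the optimization problem (NLP_n) equals 1 + a_n, where a_n is the unique positive real solution of the equation 2a^{-1} + ∑_{i=2}^{n-2} a^{-i} = a; moreover this supremum is attained at the feasible point (r, a, ρ) = (a_n^{-1}, a_n, 1 + a_n). -/
open scoped BigOperators

/-- The feasibility predicate of the optimization problem (NLP_n): real variables
`r, a, ρ` subject to `ρ ≤ 1 + r + ∑_{i=1}^{n-2} a^{-i}`, `ρ ≤ 1 + r⁻¹`, `ρ ≤ 1 + a`,
`0 < r < 1 < a`, and `1 - r > a⁻¹ - a^{-(n-2)}`. -/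
def NLPFeasible (n : ℕ) (r a ρ : ℝ) : Prop :=
  ρ ≤ 1 + r + ∑ i ∈ Finset.Icc 1 (n - 2), a⁻¹ ^ i ∧
  ρ ≤ 1 + r⁻¹ ∧
  ρ ≤ 1 + a ∧
  0 < r ∧ r < 1 ∧ 1 < a ∧
  a⁻¹ - a⁻¹ ^ (n - 2) < 1 - r

/-- For `n ∈ {3,4,5}`, the supremum of (NLP_n) equals `1 + aₙ`, where
`aₙ` is the unique positive real solution of `2a⁻¹ + ∑_{i=2}^{n-2} a^{-i} = a`; moreover
this supremum is attained at the feasible point `(r, a, ρ) = (aₙ⁻¹, aₙ, 1 + aₙ)`. -/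
theorem nlp_value_small_n (n : ℕ) (hn : n = 3 ∨ n = 4 ∨ n = 5)
    (an : ℝ) (hpos : 0 < an)
    (heq : 2 * an⁻¹ + ∑ i ∈ Finset.Icc 2 (n - 2), an⁻¹ ^ i = an)
    (huniq : ∀ b : ℝ, 0 < b → 2 * b⁻¹ + ∑ i ∈ Finset.Icc 2 (n - 2), b⁻¹ ^ i = b → b = an) :
    sSup {ρ : ℝ | ∃ r a : ℝ, NLPFeasible n r a ρ} = 1 + an ∧
      NLPFeasible n an⁻¹ an (1 + an) := by
  clear huniq
  have hipos : 0 < an⁻¹ := inv_pos.mpr hpos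
  have han1 : 1 < an := by
    by_contra h
    push_neg at h
    have h1 : 1 ≤ an⁻¹ := one_le_inv_iff₀.mpr ⟨hpos, h⟩
    have h2 : 0 ≤ ∑ i ∈ Finset.Icc 2 (n - 2), an⁻¹ ^ i :=
      Finset.sum_nonneg fun i _ => pow_nonneg hipos.le i
    linarith
  have hinv1 : an⁻¹ < 1 := inv_lt_one_of_one_lt₀ han1
  have hsplit : an⁻¹ + ∑ i ∈ Finset.Icc 1 (n - 2), an⁻¹ ^ i = an := by
    rcases hn with h | h | h <;> subst h
    · rw [show (3:ℕ) - 2 = 1 from rfl] at heq ⊢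
      rw [show Finset.Icc 2 1 = (∅ : Finset ℕ) from rfl] at heq
      rw [show Finset.Icc 1 1 = {1} from rfl]
      simp at heq ⊢
      linarith
    · rw [show (4:ℕ) - 2 = 2 from rfl] at heq ⊢
      rw [show Finset.Icc 2 2 = {2} from rfl] at heq
      rw [show Finset.Icc 1 2 = {1, 2} from rfl]
      simp [Finset.sum_insert] at heq ⊢
      linarith
    · rw [show (5:ℕ) - 2 = 3 from rfl] at heq ⊢
      rw [show Finset.Icc 2 3 = {2, 3} from rfl] at heq
      rw [show Finset.Icc 1 3 = {1, 2, 3} from rfl]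
      simp [Finset.sum_insert] at heq ⊢
      linarith
  have key : ∀ r a ρ : ℝ, NLPFeasible n r a ρ → ρ ≤ 1 + an := by
    rintro r a ρ ⟨h1, h2, h3, hr0, hr1, ha1, h5⟩
    by_contra hc
    push_neg at hc
    have hagt : an < a := by linarith
    have hrlt : r < an⁻¹ := by
      have h6 : an < r⁻¹ := by linarith
      calc r = (r⁻¹)⁻¹ := (inv_inv r).symm
        _ < an⁻¹ := inv_strictAnti₀ hpos h6
    have hainv : a⁻¹ < an⁻¹ := inv_strictAnti₀ hpos hagt
    have ha0 : (0:ℝ) < a⁻¹ := inv_pos.mpr (by linarith)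
    have hsum : ∑ i ∈ Finset.Icc 1 (n - 2), a⁻¹ ^ i
        ≤ ∑ i ∈ Finset.Icc 1 (n - 2), an⁻¹ ^ i :=
      Finset.sum_le_sum fun i _ => pow_le_pow_left₀ ha0.le hainv.le i
    linarith
  have hfeas : NLPFeasible n an⁻¹ an (1 + an) := by
    refine ⟨by linarith, by rw [inv_inv], le_refl _, hipos, hinv1, han1, ?_⟩
    have hi3 : an * an⁻¹ = 1 := mul_inv_cancel₀ hpos.ne'
    rcases hn with h | h | h <;> subst h
    · rw [show (3:ℕ) - 2 = 1 from rfl] at heq ⊢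
      rw [show Finset.Icc 2 1 = (∅ : Finset ℕ) from rfl] at heq
      simp at heq ⊢
      linarith
    · rw [show (4:ℕ) - 2 = 2 from rfl] at heq ⊢
      rw [show Finset.Icc 2 2 = {2} from rfl] at heq
      simp [Finset.sum_insert] at heq
      nlinarith [sq_nonneg (an⁻¹ - 1), pow_pos hipos 2]
    · rw [show (5:ℕ) - 2 = 3 from rfl] at heq ⊢
      rw [show Finset.Icc 2 3 = {2, 3} from rfl] at heq
      simp [Finset.sum_insert] at heq
      have hne : an ≠ 0 := hpos.ne'
      have heq' : an ^ 4 = 2 * an ^ 2 + an + 1 := by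
        have e : an ^ 3 * (2 * an⁻¹ + ((an ^ 2)⁻¹ + (an ^ 3)⁻¹)) = 2 * an ^ 2 + an + 1 := by
          field_simp
          ring
        rw [heq] at e
        linear_combination e
      have h3 : an ^ 3 - 2 * an ^ 2 + 1 > 0 := by
        nlinarith [sq_nonneg (an - 1.7), sq_nonneg (an ^ 2 - an - 1), sq_nonneg (an - 1),
          mul_pos (sub_pos.mpr han1) (sub_pos.mpr han1)]
      have key5 : an ^ 3 * ((1 - an⁻¹) - (an⁻¹ - an⁻¹ ^ 3)) = an ^ 3 - 2 * an ^ 2 + 1 := by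
        field_simp
        ring
      have h4 : 0 < an ^ 3 * ((1 - an⁻¹) - (an⁻¹ - an⁻¹ ^ 3)) := key5 ▸ h3
      nlinarith [pow_pos hpos 3]
  refine ⟨?_, hfeas⟩
  apply le_antisymm
  · exact csSup_le ⟨1 + an, an⁻¹, an, hfeas⟩ (by rintro ρ ⟨r, a, hf⟩; exact key r a ρ hf)
  · exact le_csSup ⟨1 + an, by rintro ρ ⟨r, a, hf⟩; exact key r a ρ hf⟩ ⟨an⁻¹, an, hfeas⟩
end

section
/- For every integer n ≥ 6, the supremum of the optimization problem (NLP_n) equals 1 + a_n, where a_n is the unique positive real solution of the equation 1 − a^{-1} + a^{-(n-2)} + ∑_{i=1}^{n-2} a^{-i} = a (equivalently, 1 + a^{-2} + ⋯ + a^{-(n-3)} + 2a^{-(n-2)} = a); this supremum is approached by points with a = a_n, ρ = 1 + a_n and r tending to 1 − a_n^{-1} + a_n^{-(n-2)}. -/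
open scoped BigOperators


/-- Geometric sum identity. -/
lemma geom_aux (x : ℝ) (m : ℕ) :
    (1 - x) * ∑ i ∈ Finset.Icc 1 m, x ^ i = x - x ^ (m + 1) := by
  induction m with
  | zero => simp
  | succ k ih =>
    rw [Finset.sum_Icc_succ_top (by omega), mul_add, ih]
    ring

/-- Splitting off the bottom term. -/
lemma split_aux (x : ℝ) (m : ℕ) (hm : 1 ≤ m) :
    ∑ i ∈ Finset.Icc 1 m, x ^ i = x + ∑ i ∈ Finset.Icc 2 m, x ^ i := by
  have h : Finset.Icc 1 m = insert 1 (Finset.Icc 2 m) := by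
    ext i; simp; omega
  rw [h, Finset.sum_insert (by simp), pow_one]

/-- Monotonicity of `t ↦ 1 - t + t^m + ∑_{i=1}^m t^i` on nonnegatives. -/
lemma mono_aux (u t : ℝ) (m : ℕ) (hm : 1 ≤ m) (hu0 : 0 ≤ u) (hut : u ≤ t) :
    1 - u + u ^ m + ∑ i ∈ Finset.Icc 1 m, u ^ i ≤
      1 - t + t ^ m + ∑ i ∈ Finset.Icc 1 m, t ^ i := by
  rw [split_aux u m hm, split_aux t m hm]
  have h1 : u ^ m ≤ t ^ m := pow_le_pow_left₀ hu0 hut m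
  have h2 : ∑ i ∈ Finset.Icc 2 m, u ^ i ≤ ∑ i ∈ Finset.Icc 2 m, t ^ i :=
    Finset.sum_le_sum fun i _ => pow_le_pow_left₀ hu0 hut i
  linarith

/-- Core polynomial inequality. -/
lemma core_aux (x y : ℝ) (hx0 : 0 < x) (hx1 : x < 1) (hy0 : 0 < y) (hy : y ≤ x ^ 4)
    (P : (1 - x) ^ 2 = x ^ 3 + x * y - 2 * x ^ 2 * y) : 1 + y ≤ 2 * x := by
  have hx2 : 1 / 2 < x := by
    by_contra h
    push_neg at h
    have h8 : 0 ≤ x * (1 - 2 * x) := mul_nonneg hx0.le (by linarith)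
    have h9 := mul_le_mul_of_nonneg_left hy h8
    nlinarith [pow_pos hx0 4, sq_nonneg x, sq_nonneg (x - 1/2),
      pow_le_pow_left₀ hx0.le h 4, pow_le_pow_left₀ hx0.le h 3,
      pow_le_pow_left₀ hx0.le h 5]
  have h3 : 3 * x ^ 2 ≤ 1 := by
    by_contra h
    push_neg at h
    have hx47 : 4 / 7 < x := by nlinarith
    have h4 : (1:ℝ) / 9 ≤ x ^ 4 := by nlinarith [sq_nonneg (x ^ 2 - 1 / 3)]
    have h5 : x / 3 ≤ x ^ 3 := by nlinarith
    have h6 : x / 9 ≤ x ^ 5 := by nlinarith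
    have hq : 0 < 2 * x ^ 5 + x ^ 4 + x ^ 3 + x - 1 := by linarith
    have hg := mul_pos (show (0:ℝ) < 1 - x by linarith) hq
    have h8 : (0:ℝ) ≤ x * (2 * x - 1) := by nlinarith
    have h9 := mul_le_mul_of_nonneg_left hy h8
    nlinarith [h9, hg, P]
  have h10 : 0 < x * (2 * x - 1) := by nlinarith
  by_contra hcon
  push_neg at hcon
  have h11 := mul_lt_mul_of_pos_left (show 2 * x - 1 < y by linarith) h10
  have h9 : 0 ≤ (1 - x) * (1 - 3 * x ^ 2) := mul_nonneg (by linarith) (by linarith)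
  nlinarith [h11, h9, P]

/-- For every integer `n ≥ 6`, the supremum of (NLP_n) equals `1 + aₙ`,
where `aₙ` is the unique positive real solution of
`1 - a⁻¹ + a^{-(n-2)} + ∑_{i=1}^{n-2} a^{-i} = a`; this supremum is approached by feasible
points with `a = aₙ`, `ρ` tending to `1 + aₙ` and `r` tending to `1 - aₙ⁻¹ + aₙ^{-(n-2)}`. -/
theorem nlp_value_large_n (n : ℕ) (hn : 6 ≤ n)
    (an : ℝ) (hpos : 0 < an)
    (heq : 1 - an⁻¹ + an⁻¹ ^ (n - 2) + ∑ i ∈ Finset.Icc 1 (n - 2), an⁻¹ ^ i = an)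
    (huniq : ∀ b : ℝ, 0 < b →
      1 - b⁻¹ + b⁻¹ ^ (n - 2) + ∑ i ∈ Finset.Icc 1 (n - 2), b⁻¹ ^ i = b → b = an) :
    sSup {ρ : ℝ | ∃ r a : ℝ, NLPFeasible n r a ρ} = 1 + an ∧
      ∀ ε : ℝ, 0 < ε → ∃ r ρ : ℝ, NLPFeasible n r an ρ ∧
        |ρ - (1 + an)| < ε ∧ |r - (1 - an⁻¹ + an⁻¹ ^ (n - 2))| < ε := by
  set m : ℕ := n - 2 with hmdef
  have hm4 : 4 ≤ m := by omega
  set x : ℝ := an⁻¹ with hxdef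
  have hx0 : 0 < x := inv_pos.2 hpos
  have hxan : x * an = 1 := inv_mul_cancel₀ hpos.ne'
  -- an > 1
  have han1 : 1 < an := by
    by_contra h
    push_neg at h
    have h1x : 1 ≤ x := by nlinarith
    have hsum : (m : ℝ) ≤ ∑ i ∈ Finset.Icc 1 m, x ^ i := by
      have := Finset.card_nsmul_le_sum (Finset.Icc 1 m) (fun i => x ^ i) 1
        (fun i _ => by simpa using pow_le_pow_left₀ zero_le_one h1x i)
      simpa [Nat.card_Icc] using this
    have hxm : x ≤ x ^ m := le_self_pow₀ h1x (by omega)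
    have : (4 : ℝ) ≤ (m : ℝ) := by exact_mod_cast hm4
    linarith [heq]
  have hx1 : x < 1 := inv_lt_one_of_one_lt₀ han1
  -- notation for the sum
  set S : ℝ := ∑ i ∈ Finset.Icc 1 m, x ^ i with hSdef
  set y : ℝ := x ^ m with hydef
  have hy0 : 0 < y := pow_pos hx0 m
  have hy4 : y ≤ x ^ 4 := pow_le_pow_of_le_one hx0.le hx1.le hm4
  have hgeom : (1 - x) * S = x - x * y := by
    have := geom_aux x m
    rw [hSdef, this, hydef, pow_succ]
    ring
  have heq' : 1 - x + y + S = an := heq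
  have P : (1 - x) ^ 2 = x ^ 3 + x * y - 2 * x ^ 2 * y := by
    linear_combination (x ^ 2 - x) * heq' + x * hgeom + (x - 1) * hxan
  have hcore : 1 + y ≤ 2 * x := core_aux x y hx0 hx1 hy0 hy4 P
  -- r0 and its properties
  set r0 : ℝ := 1 - x + y with hr0def
  have hr0pos : 0 < r0 := by nlinarith
  have hr0lt1 : r0 < 1 := by
    have : y < x := by
      calc y = x ^ m := rfl
        _ < x ^ 1 := pow_lt_pow_right_of_lt_one₀ hx0 hx1 (by omega)
        _ = x := pow_one x
    linarith
  have hr0x : r0 ≤ x := by simp only [hr0def]; linarith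
  -- part 2: approximation
  have happrox : ∀ ε : ℝ, 0 < ε → ∃ r ρ : ℝ, NLPFeasible n r an ρ ∧
      |ρ - (1 + an)| < ε ∧ |r - r0| < ε := by
    intro ε hε
    set δ : ℝ := min (ε / 2) (r0 / 2) with hδdef
    have hδpos : 0 < δ := lt_min (by linarith) (by linarith)
    have hδε : δ < ε := lt_of_le_of_lt (min_le_left _ _) (by linarith)
    have hδr0 : δ < r0 := lt_of_le_of_lt (min_le_right _ _) (by linarith)
    refine ⟨r0 - δ, 1 + (r0 - δ) + S, ?_, ?_, ?_⟩
    · refine ⟨le_refl _, ?_, ?_, by linarith, by linarith, han1, by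
        show x - y < 1 - (r0 - δ); simp only [hr0def]; linarith⟩
      · have hrx : r0 - δ < x := by linarith
        have hinv : x⁻¹ < (r0 - δ)⁻¹ := by
          apply inv_strictAnti₀ (by linarith) hrx
        rw [hxdef, inv_inv] at hinv
        have hρ : 1 + (r0 - δ) + S = 1 + an - δ := by
          have : r0 + S = an := by simp only [hr0def]; linarith [heq']
          linarith
        rw [hρ]
        linarith
      · have : r0 + S = an := by simp only [hr0def]; linarith [heq']
        linarith
    · have : r0 + S = an := by simp only [hr0def]; linarith [heq']
      rw [abs_lt]
      constructor <;> [linarith; linarith]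
    · rw [abs_lt]
      constructor <;> [linarith; linarith]
  -- upper bound
  have hub : ∀ ρ ∈ {ρ : ℝ | ∃ r a : ℝ, NLPFeasible n r a ρ}, ρ ≤ 1 + an := by
    rintro ρ ⟨r, a, h1, h2, h3, hr0', hr1', ha1, h5⟩
    by_cases hcase : a ≤ an
    · linarith
    · push_neg at hcase
      have hu0 : (0:ℝ) < a⁻¹ := inv_pos.2 (by linarith)
      have hux : a⁻¹ < x := by
        rw [hxdef]
        exact inv_strictAnti₀ hpos hcase
      have hmono := mono_aux a⁻¹ x m (by omega) hu0.le hux.le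
      have hr : r < 1 - a⁻¹ + a⁻¹ ^ m := by linarith
      have h6 : ρ < 1 + (1 - a⁻¹ + a⁻¹ ^ m) + ∑ i ∈ Finset.Icc 1 m, a⁻¹ ^ i := by
        linarith
      have h7 : 1 - a⁻¹ + a⁻¹ ^ m + ∑ i ∈ Finset.Icc 1 m, a⁻¹ ^ i ≤ an := by
        calc 1 - a⁻¹ + a⁻¹ ^ m + ∑ i ∈ Finset.Icc 1 m, a⁻¹ ^ i
            ≤ 1 - x + x ^ m + ∑ i ∈ Finset.Icc 1 m, x ^ i := hmono
          _ = an := heq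
      linarith
  constructor
  · obtain ⟨r, ρ1, hfeas, _, _⟩ := happrox 1 one_pos
    have hne : {ρ : ℝ | ∃ r a : ℝ, NLPFeasible n r a ρ}.Nonempty := ⟨ρ1, r, an, hfeas⟩
    have hbdd : BddAbove {ρ : ℝ | ∃ r a : ℝ, NLPFeasible n r a ρ} := ⟨1 + an, hub⟩
    refine le_antisymm (csSup_le hne hub) ?_
    apply le_of_forall_pos_le_add
    intro ε hε
    obtain ⟨r, ρ1, hfeas, habs, _⟩ := happrox ε hε
    have hmem : ρ1 ∈ {ρ : ℝ | ∃ r a : ℝ, NLPFeasible n r a ρ} := ⟨r, an, hfeas⟩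
    have := le_csSup hbdd hmem
    rw [abs_lt] at habs
    linarith
  · exact happrox
end

section
/- For every integer n ≥ 3, the relaxed problem (RP_n) attains its maximum, and every optimal solution (r, z, ρ) of (RP_n) satisfies ρ = 1 + z^{-1}. -/
open scoped BigOperators

/-- The feasibility predicate of the relaxed problem (RP_n): real variables `r, z, ρ`
subject to `ρ ≤ 1 + r + ∑_{i=1}^{n-2} z^i`, `ρ ≤ 1 + r⁻¹`, `ρ ≤ 1 + z⁻¹`, `0 ≤ r ≤ 1`,
`0 ≤ z ≤ 1` and `r ≤ 1 - z + z^{n-2}`, where `r⁻¹` (resp. `z⁻¹`) is interpreted as `+∞`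
when `r = 0` (resp. `z = 0`), i.e. the corresponding constraint is vacuous in that case. -/
def RPFeasible (n : ℕ) (r z ρ : ℝ) : Prop :=
  ρ ≤ 1 + r + ∑ i ∈ Finset.Icc 1 (n - 2), z ^ i ∧
  (0 < r → ρ ≤ 1 + r⁻¹) ∧
  (0 < z → ρ ≤ 1 + z⁻¹) ∧
  0 ≤ r ∧ r ≤ 1 ∧ 0 ≤ z ∧ z ≤ 1 ∧
  r ≤ 1 - z + z ^ (n - 2)

lemma rp_sum_le (m : ℕ) {z : ℝ} (h0 : 0 ≤ z) (h1 : z ≤ 1) :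
    (∑ i ∈ Finset.Icc 1 m, z ^ i) ≤ (m : ℝ) := by
  calc (∑ i ∈ Finset.Icc 1 m, z ^ i) ≤ ∑ i ∈ Finset.Icc 1 m, (1:ℝ) := by
        apply Finset.sum_le_sum
        intro i _
        exact pow_le_one₀ h0 h1
    _ = (m : ℝ) := by simp

lemma rp_part1 (n : ℕ) (hn : 3 ≤ n) :
    ∃ r z ρ : ℝ, RPFeasible n r z ρ ∧
      ∀ r' z' ρ' : ℝ, RPFeasible n r' z' ρ' → ρ' ≤ ρ := by
  have hnpos : (0:ℝ) < n := by positivity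
  set c : ℝ := (n:ℝ)⁻¹ with hc
  have hcpos : 0 < c := inv_pos.mpr hnpos
  set F : ℝ × ℝ → ℝ := fun p =>
    min (1 + p.1 + ∑ i ∈ Finset.Icc 1 (n-2), p.2 ^ i)
      (min (1 + (max p.1 c)⁻¹) (1 + (max p.2 c)⁻¹)) with hF
  set K : Set (ℝ × ℝ) :=
    Set.Icc (0,0) (1,1) ∩ {p : ℝ × ℝ | p.1 ≤ 1 - p.2 + p.2 ^ (n-2)} with hK
  have hKc : IsCompact K := by
    apply IsCompact.inter_right isCompact_Icc
    exact isClosed_le continuous_fst (by fun_prop)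
  have hKne : K.Nonempty := by
    refine ⟨(0,0), ?_, ?_⟩
    · simp [Set.mem_Icc, Prod.le_def]
    · simp only [Set.mem_setOf_eq]
      have : (0:ℝ) ^ (n-2) = 0 := zero_pow (by omega)
      simp [this]
  have hFc : Continuous F := by
    apply Continuous.min
    · exact (continuous_const.add continuous_fst).add
        (continuous_finset_sum _ fun i _ => continuous_snd.pow i)
    · apply Continuous.min
      · exact continuous_const.add ((continuous_fst.max continuous_const).inv₀
          fun p => ne_of_gt (lt_of_lt_of_le hcpos (le_max_right _ _)))
      · exact continuous_const.add ((continuous_snd.max continuous_const).inv₀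
          fun p => ne_of_gt (lt_of_lt_of_le hcpos (le_max_right _ _)))
  obtain ⟨p, hpK, hmax⟩ := hKc.exists_isMaxOn hKne hFc.continuousOn
  obtain ⟨hpIcc, hpcon⟩ := hpK
  rw [Set.mem_Icc] at hpIcc
  have hr0 : (0:ℝ) ≤ p.1 := hpIcc.1.1
  have hz0 : (0:ℝ) ≤ p.2 := hpIcc.1.2
  have hr1 : p.1 ≤ 1 := hpIcc.2.1
  have hz1 : p.2 ≤ 1 := hpIcc.2.2
  -- the bound ρ' ≤ F (r', z') for any feasible triple
  have hbound : ∀ r' z' ρ' : ℝ, RPFeasible n r' z' ρ' → ρ' ≤ F (r', z') := by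
    intro r' z' ρ' hf
    obtain ⟨h1, h2, h3, hr0', hr1', hz0', hz1', hrc'⟩ := hf
    have hρn : ρ' ≤ (n:ℝ) := by
      have hS := rp_sum_le (n-2) hz0' hz1'
      have hcast : ((n-2 : ℕ) : ℝ) = (n:ℝ) - 2 := by
        have : ((n-2 : ℕ) : ℝ) = (n:ℝ) - (2:ℕ) := by
          exact_mod_cast Nat.cast_sub (by omega)
        simpa using this
      rw [hcast] at hS
      linarith
    have haux : ∀ x : ℝ, 0 ≤ x → (0 < x → ρ' ≤ 1 + x⁻¹) → ρ' ≤ 1 + (max x c)⁻¹ := by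
      intro x hx h
      rcases le_or_gt c x with hcx | hxc
      · rw [max_eq_left hcx]
        exact h (lt_of_lt_of_le hcpos hcx)
      · rw [max_eq_right (le_of_lt hxc), hc, inv_inv]
        linarith
    refine le_min h1 (le_min (haux r' hr0' h2) (haux z' hz0' h3))
  refine ⟨p.1, p.2, F p, ⟨min_le_left _ _, ?_, ?_, hr0, hr1, hz0, hz1, hpcon⟩, ?_⟩
  · intro hrpos
    have h2 : F p ≤ 1 + (max p.1 c)⁻¹ := le_trans (min_le_right _ _) (min_le_left _ _)
    have : (max p.1 c)⁻¹ ≤ p.1⁻¹ := by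
      apply inv_anti₀ hrpos (le_max_left _ _)
    linarith
  · intro hzpos
    have h2 : F p ≤ 1 + (max p.2 c)⁻¹ := le_trans (min_le_right _ _) (min_le_right _ _)
    have : (max p.2 c)⁻¹ ≤ p.2⁻¹ := by
      apply inv_anti₀ hzpos (le_max_left _ _)
    linarith
  · intro r' z' ρ' hf
    have h1 := hbound r' z' ρ' hf
    have hmem : (r', z') ∈ K := by
      obtain ⟨_, _, _, hr0', hr1', hz0', hz1', hrc'⟩ := hf
      exact ⟨Set.mem_Icc.mpr ⟨⟨hr0', hz0'⟩, ⟨hr1', hz1'⟩⟩, hrc'⟩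
    exact le_trans h1 (hmax hmem)

lemma rp_sum_gap (m : ℕ) (hm : 1 ≤ m) {a b : ℝ} (ha : 0 ≤ a) (hab : a ≤ b) :
    b - a ≤ (∑ i ∈ Finset.Icc 1 m, b ^ i) - ∑ i ∈ Finset.Icc 1 m, a ^ i := by
  rw [← Finset.sum_sub_distrib]
  have h : ∑ i ∈ ({1} : Finset ℕ), (b ^ i - a ^ i) ≤
      ∑ i ∈ Finset.Icc 1 m, (b ^ i - a ^ i) := by
    apply Finset.sum_le_sum_of_subset_of_nonneg
    · intro x hx
      simp only [Finset.mem_singleton] at hx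
      subst hx
      simp [Finset.mem_Icc, hm]
    · intro i _ _
      have := pow_le_pow_left₀ ha hab i
      linarith
  simpa using h

lemma rp_sum_gap2 (m : ℕ) (hm : 2 ≤ m) {a b : ℝ} (ha : 0 ≤ a) (hab : a ≤ b) :
    (b - a) + (b ^ 2 - a ^ 2) ≤
      (∑ i ∈ Finset.Icc 1 m, b ^ i) - ∑ i ∈ Finset.Icc 1 m, a ^ i := by
  rw [← Finset.sum_sub_distrib]
  have h : ∑ i ∈ ({1, 2} : Finset ℕ), (b ^ i - a ^ i) ≤
      ∑ i ∈ Finset.Icc 1 m, (b ^ i - a ^ i) := by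
    apply Finset.sum_le_sum_of_subset_of_nonneg
    · intro x hx
      simp only [Finset.mem_insert, Finset.mem_singleton] at hx
      rcases hx with h | h <;> subst h <;> simp [Finset.mem_Icc] <;> omega
    · intro i _ _
      have := pow_le_pow_left₀ ha hab i
      linarith
  rw [Finset.sum_insert (by norm_num), Finset.sum_singleton] at h
  simpa using h

lemma rp_sum_zero (m : ℕ) : (∑ i ∈ Finset.Icc 1 m, (0:ℝ) ^ i) = 0 := by
  apply Finset.sum_eq_zero
  intro i hi
  simp only [Finset.mem_Icc] at hi
  exact zero_pow (by omega)

lemma rp_part2 (n : ℕ) (hn : 3 ≤ n) :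
    ∀ r z ρ : ℝ, RPFeasible n r z ρ →
      (∀ r' z' ρ' : ℝ, RPFeasible n r' z' ρ' → ρ' ≤ ρ) →
      0 < z ∧ ρ = 1 + z⁻¹ := by
  intro r z ρ hfeas hopt
  obtain ⟨h1, h2, h3, hr0, hr1, hz0, hz1, hrc⟩ := hfeas
  have hm1 : 1 ≤ n - 2 := by omega
  -- Step A : ρ > 2
  have hρ2 : 2 < ρ := by
    rcases eq_or_lt_of_le hn with h3' | h4
    · -- n = 3
      have hfeas' : RPFeasible n (3/5) (3/5) (11/5) := by
        have hIcc : n - 2 = 1 := by omega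
        refine ⟨?_, ?_, ?_, by norm_num, by norm_num, by norm_num, by norm_num, ?_⟩
        · rw [hIcc]; simp [Finset.Icc_self]; norm_num
        · intro _; norm_num
        · intro _; norm_num
        · rw [hIcc]; norm_num
      have := hopt _ _ _ hfeas'
      linarith
    · -- 4 ≤ n
      have hm2 : 2 ≤ n - 2 := by omega
      have hfeas' : RPFeasible n (1/2) (1/2) (9/4) := by
        refine ⟨?_, ?_, ?_, by norm_num, by norm_num, by norm_num, by norm_num, ?_⟩
        · have := rp_sum_gap2 (n-2) hm2 (a := 0) (b := 1/2) le_rfl (by norm_num)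
          rw [rp_sum_zero] at this
          nlinarith [this]
        · intro _; norm_num
        · intro _; norm_num
        · have : (0:ℝ) ≤ (1/2 : ℝ) ^ (n-2) := by positivity
          linarith
      have := hopt _ _ _ hfeas'
      linarith
  -- z > 0
  have hzpos : 0 < z := by
    rcases eq_or_lt_of_le hz0 with h | h
    · exfalso
      rw [← h] at h1
      rw [rp_sum_zero] at h1
      linarith
    · exact h
  refine ⟨hzpos, ?_⟩
  have hρz : ρ ≤ 1 + z⁻¹ := h3 hzpos
  by_contra hne
  have hlt : ρ < 1 + z⁻¹ := lt_of_le_of_ne hρz hne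
  -- z < 1
  have hz1' : z < 1 := by
    rcases eq_or_lt_of_le hz1 with h | h
    · exfalso; rw [h] at hρz; norm_num at hρz; linarith
    · exact h
  set u : ℝ := (ρ - 1)⁻¹ with hu
  have hρ1 : (1:ℝ) < ρ - 1 := by linarith
  have hρ1pos : (0:ℝ) < ρ - 1 := by linarith
  have hupos : 0 < u := inv_pos.mpr hρ1pos
  have hu1 : u < 1 := by
    rw [hu]
    exact inv_lt_one_of_one_lt₀ hρ1
  have hzu : z < u := by
    have h' : z * (ρ - 1) < 1 := by
      have := mul_lt_mul_of_pos_left (show ρ - 1 < z⁻¹ by linarith) hzpos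
      rwa [mul_inv_cancel₀ (ne_of_gt hzpos)] at this
    have h'' : z * (ρ - 1) < u * (ρ - 1) := by
      rw [hu, inv_mul_cancel₀ (ne_of_gt hρ1pos)]
      exact h'
    exact lt_of_mul_lt_mul_right h'' (le_of_lt hρ1pos)
  -- key fact: z'' ≤ u and z'' > 0 imply ρ < 1 + z''⁻¹  (we use z'' < u)
  have key : ∀ w : ℝ, 0 < w → w < u → ρ < 1 + w⁻¹ := by
    intro w hw hwu
    have : u⁻¹ < w⁻¹ := by
      exact inv_strictAnti₀ hw hwu
    rw [hu, inv_inv] at this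
    linarith
  rcases eq_or_lt_of_le hr0 with hre | hrpos
  · -- case r = 0
    set ε : ℝ := (u - z) / 2 with hε
    have hεpos : 0 < ε := by rw [hε]; linarith
    set z'' : ℝ := z + ε with hz''
    have hz''u : z'' < u := by rw [hz'', hε]; linarith
    have hz''pos : 0 < z'' := by positivity
    have hz''1 : z'' ≤ 1 := by linarith
    set ρ'' : ℝ := min (1 + 0 + ∑ i ∈ Finset.Icc 1 (n-2), z'' ^ i) (1 + z''⁻¹) with hρ''
    have hfeas'' : RPFeasible n 0 z'' ρ'' := by
      refine ⟨min_le_left _ _, ?_, fun _ => min_le_right _ _, le_rfl, by norm_num,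
        le_of_lt hz''pos, hz''1, ?_⟩
      · intro h; exact absurd h (lt_irrefl 0)
      · have : (0:ℝ) ≤ z'' ^ (n-2) := by positivity
        linarith
    have hle := hopt _ _ _ hfeas''
    have hgt : ρ < ρ'' := by
      rw [hρ'']
      apply lt_min
      · have hgap := rp_sum_gap (n-2) hm1 hz0 (show z ≤ z'' by linarith)
        rw [← hre] at h1
        have : z'' - z = ε := by rw [hz'']; ring
        linarith
      · exact key z'' hz''pos hz''u
    linarith
  · -- case r > 0
    have hρr : ρ ≤ 1 + r⁻¹ := h2 hrpos
    have hr1' : r < 1 := by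
      by_contra h
      push_neg at h
      have : r⁻¹ ≤ 1 := inv_le_one_of_one_le₀ h
      linarith
    set ε : ℝ := min r (u - z) / 2 with hε
    have hεpos : 0 < ε := by
      rw [hε]
      have : 0 < min r (u - z) := lt_min hrpos (by linarith)
      linarith
    have hεr : ε < r := by
      rw [hε]
      have : min r (u - z) ≤ r := min_le_left _ _
      linarith
    have hεu : z + ε < u := by
      rw [hε]
      have : min r (u - z) ≤ u - z := min_le_right _ _
      linarith
    set z'' : ℝ := z + ε with hz''
    have hz''pos : 0 < z'' := by positivity
    have hz''1 : z'' ≤ 1 := by linarith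
    have hkeyz : ρ < 1 + z''⁻¹ := key z'' hz''pos (by rw [hz'']; exact hεu)
    rcases eq_or_lt_of_le hn with h3' | h4
    · -- n = 3 : move (r - ε/2, z + ε)
      have hIcc : n - 2 = 1 := by omega
      set r'' : ℝ := r - ε / 2 with hr''
      have hr''pos : 0 < r'' := by rw [hr'']; linarith
      set ρ'' : ℝ := min (1 + r'' + ∑ i ∈ Finset.Icc 1 (n-2), z'' ^ i)
        (min (1 + r''⁻¹) (1 + z''⁻¹)) with hρ''
      have hfeas'' : RPFeasible n r'' z'' ρ'' := by
        refine ⟨min_le_left _ _,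
          fun _ => le_trans (min_le_right _ _) (min_le_left _ _),
          fun _ => le_trans (min_le_right _ _) (min_le_right _ _),
          le_of_lt hr''pos, by rw [hr'']; linarith,
          le_of_lt hz''pos, hz''1, ?_⟩
        rw [hIcc, pow_one]
        rw [hr'']
        linarith
      have hle := hopt _ _ _ hfeas''
      have hgt : ρ < ρ'' := by
        rw [hρ'']
        have hsum : (∑ i ∈ Finset.Icc 1 (n-2), z'' ^ i) = z'' := by
          rw [hIcc]; simp [Finset.Icc_self]
        have hsum2 : (∑ i ∈ Finset.Icc 1 (n-2), z ^ i) = z := by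
          rw [hIcc]; simp [Finset.Icc_self]
        rw [hsum2] at h1
        refine lt_min ?_ (lt_min ?_ hkeyz)
        · rw [hsum, hr'', hz'']; linarith
        · have : r⁻¹ < r''⁻¹ := inv_strictAnti₀ hr''pos (by rw [hr'']; linarith)
          linarith
      linarith
    · -- n ≥ 4 : move (r - ε, z + ε)
      have hm2 : 2 ≤ n - 2 := by omega
      set r'' : ℝ := r - ε with hr''
      have hr''pos : 0 < r'' := by rw [hr'']; linarith
      set ρ'' : ℝ := min (1 + r'' + ∑ i ∈ Finset.Icc 1 (n-2), z'' ^ i)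
        (min (1 + r''⁻¹) (1 + z''⁻¹)) with hρ''
      have hfeas'' : RPFeasible n r'' z'' ρ'' := by
        refine ⟨min_le_left _ _,
          fun _ => le_trans (min_le_right _ _) (min_le_left _ _),
          fun _ => le_trans (min_le_right _ _) (min_le_right _ _),
          le_of_lt hr''pos, by rw [hr'']; linarith,
          le_of_lt hz''pos, hz''1, ?_⟩
        have hpow : z ^ (n-2) ≤ z'' ^ (n-2) :=
          pow_le_pow_left₀ hz0 (by rw [hz'']; linarith) _
        rw [hr'', hz'']
        linarith
      have hle := hopt _ _ _ hfeas''
      have hgt : ρ < ρ'' := by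
        rw [hρ'']
        refine lt_min ?_ (lt_min ?_ hkeyz)
        · have hgap := rp_sum_gap2 (n-2) hm2 hz0 (show z ≤ z'' by rw [hz'']; linarith)
          have hsq : z ^ 2 < z'' ^ 2 := by
            rw [hz'']
            nlinarith
          rw [hr'']
          have : z'' - z = ε := by rw [hz'']; ring
          linarith [hgap]
        · have : r⁻¹ < r''⁻¹ := inv_strictAnti₀ hr''pos (by rw [hr'']; linarith)
          linarith
      linarith

/-- For every integer `n ≥ 3`, the relaxed problem (RP_n) attains its
maximum, and every optimal solution `(r, z, ρ)` of (RP_n) satisfies `ρ = 1 + z⁻¹`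
(in particular `z > 0`). -/
theorem rp_attains_max_and_last_constraint_tight (n : ℕ) (hn : 3 ≤ n) :
    (∃ r z ρ : ℝ, RPFeasible n r z ρ ∧
      ∀ r' z' ρ' : ℝ, RPFeasible n r' z' ρ' → ρ' ≤ ρ) ∧
    (∀ r z ρ : ℝ, RPFeasible n r z ρ →
      (∀ r' z' ρ' : ℝ, RPFeasible n r' z' ρ' → ρ' ≤ ρ) →
      0 < z ∧ ρ = 1 + z⁻¹) := by
  exact ⟨rp_part1 n hn, rp_part2 n hn⟩
end

section
/- For each integer n ≥ 3, let a_{n,1} be the unique positive real solution of a = 2a^{-1} + ∑_{i=2}^{n-2} a^{-i}, and let a_{n,2} be the unique positive real solution of a = 1 − a^{-1} + a^{-(n-2)} + ∑_{i=1}^{n-2} a^{-i}. Then: (i) both sequences (a_{n,1})_{n≥3} and (a_{n,2})_{n≥3} are increasing in n; (ii) a_{n,2} < 2 for every n ≥ 3; and (iii) a_{n,2} converges, as n → ∞, to the unique real solution a_∞ of a³ − 2a² + a − 1 = 0 (equivalently, of a = 1 + 1/(a(a−1))). -/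
open scoped BigOperators
lemma geomIcc (r : ℝ) (m : ℕ) :
    (1 - r) * ∑ i ∈ Finset.Icc 1 m, r ^ i = r - r ^ (m + 1) := by
  induction m with
  | zero => simp
  | succ k ih =>
    rw [Finset.sum_Icc_succ_top (by omega : 1 ≤ k + 1)]
    ring_nf
    ring_nf at ih
    linear_combination ih

lemma sumIccSplit (m : ℕ) (hm : 1 ≤ m) (f : ℕ → ℝ) :
    ∑ i ∈ Finset.Icc 1 m, f i = f 1 + ∑ i ∈ Finset.Icc 2 m, f i := by
  rw [show Finset.Icc 1 m = insert 1 (Finset.Icc 2 m) by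
    ext x; simp [Finset.mem_Icc, Finset.mem_insert]; omega]
  rw [Finset.sum_insert (by simp [Finset.mem_Icc])]

lemma sumPowAnti {x y : ℝ} (hx : 0 < x) (hxy : x ≤ y) (s : Finset ℕ) :
    ∑ i ∈ s, y⁻¹ ^ i ≤ ∑ i ∈ s, x⁻¹ ^ i :=
  Finset.sum_le_sum fun i _ => pow_le_pow_left₀ (inv_nonneg.2 (by linarith))
    (inv_anti₀ hx hxy) i

set_option maxHeartbeats 2000000 in

/-- For each `n ≥ 3`, let `a1 n` be the unique positive real solution of
`a = 2a⁻¹ + ∑_{i=2}^{n-2} a^{-i}`, and `a2 n` the unique positive real solution of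
`a = 1 - a⁻¹ + a^{-(n-2)} + ∑_{i=1}^{n-2} a^{-i}` (both lie in `(1,∞)`).  Then (i) both
sequences are increasing in `n`; (ii) `a2 n < 2` for every `n ≥ 3`; (iii) `a2 n` converges,
as `n → ∞`, to the unique real solution `ainf` of `a³ - 2a² + a - 1 = 0`. -/
theorem sequences_increasing_bounded_and_convergent (a1 a2 : ℕ → ℝ)
    (h1gt : ∀ n, 3 ≤ n → 1 < a1 n)
    (h1eq : ∀ n, 3 ≤ n →
      a1 n = 2 * (a1 n)⁻¹ + ∑ i ∈ Finset.Icc 2 (n - 2), (a1 n)⁻¹ ^ i)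
    (h1uniq : ∀ n, 3 ≤ n → ∀ b : ℝ, 0 < b →
      b = 2 * b⁻¹ + ∑ i ∈ Finset.Icc 2 (n - 2), b⁻¹ ^ i → b = a1 n)
    (h2gt : ∀ n, 3 ≤ n → 1 < a2 n)
    (h2eq : ∀ n, 3 ≤ n →
      a2 n = 1 - (a2 n)⁻¹ + (a2 n)⁻¹ ^ (n - 2) + ∑ i ∈ Finset.Icc 1 (n - 2), (a2 n)⁻¹ ^ i)
    (h2uniq : ∀ n, 3 ≤ n → ∀ b : ℝ, 0 < b →
      b = 1 - b⁻¹ + b⁻¹ ^ (n - 2) + ∑ i ∈ Finset.Icc 1 (n - 2), b⁻¹ ^ i → b = a2 n)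
    (ainf : ℝ) (hainf : ainf ^ 3 - 2 * ainf ^ 2 + ainf - 1 = 0)
    (hainfuniq : ∀ x : ℝ, x ^ 3 - 2 * x ^ 2 + x - 1 = 0 → x = ainf) :
    (∀ n, 3 ≤ n → a1 n < a1 (n + 1) ∧ a2 n < a2 (n + 1)) ∧
    (∀ n, 3 ≤ n → a2 n < 2) ∧
    Filter.Tendsto a2 Filter.atTop (nhds ainf) := by
  -- rewritten fixed-point equation for a2
  have h2eq' : ∀ n, 3 ≤ n → a2 n = 1 + (a2 n)⁻¹ ^ (n - 2)
      + ∑ i ∈ Finset.Icc 2 (n - 2), (a2 n)⁻¹ ^ i := by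
    intro n hn
    have h := h2eq n hn
    rw [sumIccSplit (n - 2) (by omega)] at h
    rw [pow_one] at h
    linarith
  -- (ii)  a2 n < 2
  have hlt2 : ∀ n, 3 ≤ n → a2 n < 2 := by
    intro n hn
    by_contra hge
    push_neg at hge
    set a := a2 n with ha
    have ha1 : 1 < a := h2gt n hn
    have hapos : (0:ℝ) < a := by linarith
    -- geometric sum at 2
    have hg := geomIcc (2:ℝ)⁻¹ (n - 2)
    have hsp := sumIccSplit (n - 2) (by omega) (fun i => ((2:ℝ)⁻¹) ^ i)
    rw [pow_succ] at hg
    have hS1 : ∑ i ∈ Finset.Icc 1 (n - 2), ((2:ℝ)⁻¹) ^ i = 1 - (2:ℝ)⁻¹ ^ (n - 2) := by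
      have h2 : (1 - (2:ℝ)⁻¹) = 1/2 := by norm_num
      nlinarith [hg]
    have hS2 : ∑ i ∈ Finset.Icc 2 (n - 2), ((2:ℝ)⁻¹) ^ i = 1/2 - (2:ℝ)⁻¹ ^ (n - 2) := by
      rw [hS1] at hsp
      simp only [pow_one] at hsp
      norm_num at hsp ⊢
      linarith
    have hinv : a⁻¹ ≤ (2:ℝ)⁻¹ := inv_anti₀ (by norm_num) hge
    have hpow : a⁻¹ ^ (n - 2) ≤ (2:ℝ)⁻¹ ^ (n - 2) :=
      pow_le_pow_left₀ (inv_nonneg.2 hapos.le) hinv _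
    have hsum : ∑ i ∈ Finset.Icc 2 (n - 2), a⁻¹ ^ i
        ≤ ∑ i ∈ Finset.Icc 2 (n - 2), ((2:ℝ)⁻¹) ^ i := sumPowAnti (by norm_num) hge _
    have he := h2eq' n hn
    rw [hS2] at hsum
    linarith
  -- (i) for a2
  have mono2 : ∀ n, 3 ≤ n → a2 n < a2 (n + 1) := by
    intro n hn
    set x := a2 n with hxdef
    set y := a2 (n + 1) with hydef
    have hx1 : 1 < x := h2gt n hn
    have hy1 : 1 < y := h2gt (n + 1) (by omega)
    have hx2 : x < 2 := hlt2 n hn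
    have hxpos : (0:ℝ) < x := by linarith
    have hypos : (0:ℝ) < y := by linarith
    have hex := h2eq' n hn
    have hey := h2eq' (n + 1) (by omega)
    rw [show (n + 1) - 2 = (n - 2) + 1 from by omega] at hey
    by_contra hle
    push_neg at hle  -- y ≤ x
    have hst : ∑ i ∈ Finset.Icc 2 ((n - 2) + 1), x⁻¹ ^ i
        = (∑ i ∈ Finset.Icc 2 (n - 2), x⁻¹ ^ i) + x⁻¹ ^ ((n - 2) + 1) :=
      Finset.sum_Icc_succ_top (by omega) _
    have hinv : x⁻¹ ≤ y⁻¹ := inv_anti₀ hypos hle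
    have hsum : ∑ i ∈ Finset.Icc 2 ((n - 2) + 1), x⁻¹ ^ i
        ≤ ∑ i ∈ Finset.Icc 2 ((n - 2) + 1), y⁻¹ ^ i := sumPowAnti hypos hle _
    have hple : x⁻¹ ^ ((n - 2) + 1) ≤ y⁻¹ ^ ((n - 2) + 1) :=
      pow_le_pow_left₀ (inv_nonneg.2 hxpos.le) hinv _
    have hTpos : (0:ℝ) < x⁻¹ ^ (n - 2) := pow_pos (inv_pos.2 hxpos) _
    have hxinv : 1/2 < x⁻¹ := by
      rw [show (1:ℝ)/2 = (2:ℝ)⁻¹ by norm_num]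
      exact inv_strictAnti₀ hxpos hx2
    have hTp : x⁻¹ ^ (n - 2) < 2 * x⁻¹ ^ ((n - 2) + 1) := by
      rw [pow_succ]
      nlinarith [mul_pos hTpos (by linarith : (0:ℝ) < x⁻¹ - 1/2)]
    linarith
  -- (i) for a1
  have mono1 : ∀ n, 3 ≤ n → a1 n < a1 (n + 1) := by
    intro n hn
    set x := a1 n with hxdef
    set y := a1 (n + 1) with hydef
    have hx1 : 1 < x := h1gt n hn
    have hy1 : 1 < y := h1gt (n + 1) (by omega)
    have hxpos : (0:ℝ) < x := by linarith
    have hypos : (0:ℝ) < y := by linarith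
    have hex := h1eq n hn
    have hey := h1eq (n + 1) (by omega)
    rw [show (n + 1) - 2 = (n - 2) + 1 from by omega] at hey
    by_contra hle
    push_neg at hle
    have hst : ∑ i ∈ Finset.Icc 2 ((n - 2) + 1), x⁻¹ ^ i
        = (∑ i ∈ Finset.Icc 2 (n - 2), x⁻¹ ^ i) + x⁻¹ ^ ((n - 2) + 1) :=
      Finset.sum_Icc_succ_top (by omega) _
    have hinv : x⁻¹ ≤ y⁻¹ := inv_anti₀ hypos hle
    have hsum : ∑ i ∈ Finset.Icc 2 ((n - 2) + 1), x⁻¹ ^ i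
        ≤ ∑ i ∈ Finset.Icc 2 ((n - 2) + 1), y⁻¹ ^ i := sumPowAnti hypos hle _
    have hppos : (0:ℝ) < x⁻¹ ^ ((n - 2) + 1) := pow_pos (inv_pos.2 hxpos) _
    linarith
  -- lower bound  3/2 ≤ a2 n
  have hbase : 3/2 ≤ a2 3 := by
    have he := h2eq' 3 (le_refl 3)
    have h1 : 1 < a2 3 := h2gt 3 (le_refl 3)
    have hpos : (0:ℝ) < a2 3 := by linarith
    simp only [show (3:ℕ) - 2 = 1 from rfl, pow_one,
      Finset.Icc_eq_empty (by omega : ¬ (2:ℕ) ≤ 1), Finset.sum_empty, add_zero] at he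
    -- he : a2 3 = 1 + (a2 3)⁻¹
    have hm : a2 3 * (a2 3)⁻¹ = 1 := mul_inv_cancel₀ (by linarith)
    by_contra hc
    push_neg at hc
    nlinarith [mul_pos (by linarith : (0:ℝ) < 3/2 - a2 3) hpos]
  have hlow : ∀ n, 3 ≤ n → 3/2 ≤ a2 n := by
    intro n hn
    induction n with
    | zero => omega
    | succ k ih =>
      rcases Nat.lt_or_ge k 3 with h | h
      · have : k = 2 := by omega
        subst this
        exact hbase
      · exact (ih h).trans (mono2 k h).le
  -- bounds for ainf
  have hainf0 : 0 < ainf := by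
    by_contra hc
    push_neg at hc
    nlinarith [sq_nonneg (ainf - 1), mul_nonpos_of_nonpos_of_nonneg hc (sq_nonneg (ainf - 1))]
  have hainf1 : 3/2 ≤ ainf := by
    by_contra hc
    push_neg at hc
    nlinarith [mul_nonneg (by linarith : (0:ℝ) ≤ 3/2 - ainf) (sq_nonneg (ainf - 1/3)),
      hainf0.le, sq_nonneg ainf]
  have hainf2 : ainf < 2 := by
    by_contra hc
    push_neg at hc
    nlinarith [sq_nonneg (ainf - 1)]
  -- key cubic identity
  have hkey : ∀ n, 3 ≤ n → (a2 n) ^ 3 - 2 * (a2 n) ^ 2 + a2 n - 1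
      = (a2 n) * (a2 n)⁻¹ ^ (n - 2) * (a2 n - 2) := by
    intro n hn
    set a := a2 n with ha
    have ha1 : 1 < a := h2gt n hn
    have hr : a * a⁻¹ = 1 := mul_inv_cancel₀ (by linarith)
    have e1 := h2eq n hn
    have e2 := geomIcc a⁻¹ (n - 2)
    rw [pow_succ] at e2
    set S := ∑ i ∈ Finset.Icc 1 (n - 2), a⁻¹ ^ i with hS
    set t := a⁻¹ ^ (n - 2) with ht
    -- e1 : a = 1 - a⁻¹ + t + S ;  e2 : (1 - a⁻¹) * S = a⁻¹ - t * a⁻¹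
    linear_combination (a^2 * (1 - a⁻¹)) * e1 + a^2 * e2
      + (a^2 + a * a⁻¹ + 1 - a - 2 * t * a) * hr
  -- quantitative bound
  have hbound : ∀ n, 3 ≤ n → |a2 n - ainf| ≤ 24 * (2/3:ℝ) ^ n := by
    intro n hn
    have h32 : 3/2 ≤ a2 n := hlow n hn
    have h2 : a2 n < 2 := hlt2 n hn
    have hk := hkey n hn
    set a := a2 n with ha
    have hapos : (0:ℝ) < a := by linarith
    set t := a⁻¹ ^ (n - 2) with ht
    have htpos : 0 < t := pow_pos (inv_pos.2 hapos) _
    have hinv : a⁻¹ ≤ 2/3 := by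
      rw [show (2:ℝ)/3 = ((3:ℝ)/2)⁻¹ by norm_num]
      exact inv_anti₀ (by norm_num) h32
    have htle : t ≤ (2/3:ℝ) ^ (n - 2) :=
      pow_le_pow_left₀ (inv_nonneg.2 hapos.le) hinv _
    clear_value t
    clear_value a
    set Q := a^2 + a * ainf + ainf^2 - 2*a - 2*ainf + 1 with hQdef
    have hQ : 3/16 ≤ Q := by
      rw [hQdef]
      nlinarith [sq_nonneg (a + (ainf - 2)/2), hainf1, hainf2]
    have hfact : (a - ainf) * Q = a * t * (a - 2) := by
      rw [hQdef]
      linear_combination hk - hainf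
    have habs : |a - ainf| * (3/16) ≤ 2 * t := by
      have h1 : |a - ainf| * (3/16) ≤ |a - ainf| * Q :=
        mul_le_mul_of_nonneg_left hQ (abs_nonneg _)
      have h2' : |a - ainf| * Q = |a * t * (a - 2)| := by
        rw [← hfact, abs_mul, abs_of_nonneg (by linarith : (0:ℝ) ≤ Q)]
      have h3' : |a * t * (a - 2)| ≤ 2 * t := by
        have hnp : a * t * (a - 2) ≤ 0 := by
          nlinarith [mul_nonneg (mul_nonneg hapos.le htpos.le) (by linarith : (0:ℝ) ≤ 2 - a)]
        rw [abs_of_nonpos hnp]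
        nlinarith [mul_nonneg htpos.le (sq_nonneg (a - 1))]
      rw [h2'] at h1
      exact h1.trans h3'
    have hpow : (2/3:ℝ) ^ (n - 2) = (9/4) * (2/3:ℝ) ^ n := by
      have h : (2/3:ℝ) ^ n = (2/3:ℝ) ^ (n - 2) * (2/3:ℝ) ^ 2 := by
        rw [← pow_add]
        congr 1
        omega
      rw [h]; ring
    have : |a - ainf| ≤ (32/3) * t := by linarith
    calc |a - ainf| ≤ (32/3) * t := this
      _ ≤ (32/3) * ((2/3:ℝ) ^ (n - 2)) := by linarith
      _ = 24 * (2/3:ℝ) ^ n := by rw [hpow]; ring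
  refine ⟨fun n hn => ⟨mono1 n hn, mono2 n hn⟩, hlt2, ?_⟩
  rw [tendsto_iff_dist_tendsto_zero]
  simp only [Real.dist_eq]
  apply squeeze_zero' (Filter.Eventually.of_forall fun n => abs_nonneg _)
    (Filter.eventually_atTop.2 ⟨3, hbound⟩)
  simpa using (tendsto_pow_atTop_nhds_zero_of_lt_one (by norm_num)
    (by norm_num : (2/3:ℝ) < 1)).const_mul 24
end

section
/- For each integer n ≥ 3, let a_{n,1} be the unique positive real solution of a = 2a^{-1} + ∑_{i=2}^{n-2} a^{-i}, and let a_{n,2} be the unique positive real solution of a = 1 − a^{-1} + a^{-(n-2)} + ∑_{i=1}^{n-2} a^{-i}. Then a_{n,1} < a_{n,2} for n ∈ {3,4,5}, and a_{n,2} < a_{n,1} for every n ≥ 6. -/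
open scoped BigOperators

/-- IVT helper: if `f 1 < 0 < f c`, `f` is continuous on `[1,c]`, and `r` is the unique
positive root of `f`, then `r < c`. -/
lemma aux_root_lt {f : ℝ → ℝ} {r c : ℝ}
    (hc : ContinuousOn f (Set.Icc 1 c))
    (h1 : f 1 < 0) (hr : ∀ b : ℝ, 0 < b → f b = 0 → b = r)
    (hc1 : 1 ≤ c) (hfc : 0 < f c) : r < c := by
  obtain ⟨b, hb, hfb⟩ := intermediate_value_Icc hc1 hc ⟨le_of_lt h1, le_of_lt hfc⟩
  have hb1 : (1:ℝ) ≤ b := hb.1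
  have hbr : b = r := hr b (lt_of_lt_of_le one_pos hb1) hfb
  rcases lt_or_eq_of_le (hbr ▸ hb.2) with h | h
  · exact h
  · exfalso; rw [hbr, h] at hfb; exact absurd hfb (ne_of_lt hfc).symm

/-- If `c > 1` exceeds the RHS of the first equation, it exceeds the unique root. -/
lemma aux1 (n : ℕ) (hn : 3 ≤ n) (r c : ℝ)
    (huniq : ∀ b : ℝ, 0 < b →
      b = 2 * b⁻¹ + ∑ i ∈ Finset.Icc 2 (n - 2), b⁻¹ ^ i → b = r)
    (hc : 1 < c)
    (hgt : 2 * c⁻¹ + ∑ i ∈ Finset.Icc 2 (n - 2), c⁻¹ ^ i < c) : r < c := by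
  set f : ℝ → ℝ := fun b => b - (2 * b⁻¹ + ∑ i ∈ Finset.Icc 2 (n - 2), b⁻¹ ^ i) with hf
  have hcont : ContinuousOn f (Set.Icc 1 c) := by
    have h0 : ∀ x ∈ Set.Icc (1:ℝ) c, x ≠ 0 := fun x hx => by
      have := hx.1; positivity
    have hinv : ContinuousOn (fun b : ℝ => b⁻¹) (Set.Icc 1 c) :=
      continuousOn_id.inv₀ h0
    exact continuousOn_id.sub ((continuousOn_const.mul hinv).add
      (continuousOn_finset_sum _ fun i _ => hinv.pow i))
  have hf1 : f 1 < 0 := by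
    have hcard : ((Finset.Icc 2 (n - 2)).card : ℝ) = ((n - 3 : ℕ) : ℝ) := by
      have : (Finset.Icc 2 (n - 2)).card = n - 3 := by
        rw [Nat.card_Icc]; omega
      exact_mod_cast congrArg Nat.cast this
    have hval : f 1 = 1 - (2 * 1 + ((n - 3 : ℕ) : ℝ)) := by
      simp only [hf, inv_one, one_pow, Finset.sum_const, nsmul_eq_mul, mul_one, hcard]
    rw [hval]
    have : (0:ℝ) ≤ ((n - 3 : ℕ) : ℝ) := Nat.cast_nonneg _
    linarith
  have hroot : ∀ b : ℝ, 0 < b → f b = 0 → b = r := fun b hb hfb =>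
    huniq b hb (sub_eq_zero.mp hfb)
  exact aux_root_lt hcont hf1 hroot hc.le (by simpa [hf] using sub_pos.mpr hgt)

/-- If `c > 1` exceeds the RHS of the second equation, it exceeds the unique root. -/
lemma aux2 (n : ℕ) (hn : 3 ≤ n) (r c : ℝ)
    (huniq : ∀ b : ℝ, 0 < b →
      b = 1 - b⁻¹ + b⁻¹ ^ (n - 2) + ∑ i ∈ Finset.Icc 1 (n - 2), b⁻¹ ^ i → b = r)
    (hc : 1 < c)
    (hgt : 1 - c⁻¹ + c⁻¹ ^ (n - 2) + ∑ i ∈ Finset.Icc 1 (n - 2), c⁻¹ ^ i < c) : r < c := by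
  set f : ℝ → ℝ :=
    fun b => b - (1 - b⁻¹ + b⁻¹ ^ (n - 2) + ∑ i ∈ Finset.Icc 1 (n - 2), b⁻¹ ^ i) with hf
  have hcont : ContinuousOn f (Set.Icc 1 c) := by
    have h0 : ∀ x ∈ Set.Icc (1:ℝ) c, x ≠ 0 := fun x hx => by
      have := hx.1; positivity
    have hinv : ContinuousOn (fun b : ℝ => b⁻¹) (Set.Icc 1 c) :=
      continuousOn_id.inv₀ h0
    exact continuousOn_id.sub (((continuousOn_const.sub hinv).add (hinv.pow _)).add
      (continuousOn_finset_sum _ fun i _ => hinv.pow i))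
  have hf1 : f 1 < 0 := by
    have hcard : ((Finset.Icc 1 (n - 2)).card : ℝ) = ((n - 2 : ℕ) : ℝ) := by
      have : (Finset.Icc 1 (n - 2)).card = n - 2 := by
        rw [Nat.card_Icc]; omega
      exact_mod_cast congrArg Nat.cast this
    have h2 : (1:ℝ) ≤ ((n - 2 : ℕ) : ℝ) := by
      have : 1 ≤ n - 2 := by omega
      exact_mod_cast this
    have hval : f 1 = 1 - (1 - 1 + 1 + ((n - 2 : ℕ) : ℝ)) := by
      simp only [hf, inv_one, one_pow, Finset.sum_const, nsmul_eq_mul, mul_one, hcard]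
    rw [hval]; linarith
  have hroot : ∀ b : ℝ, 0 < b → f b = 0 → b = r := fun b hb hfb =>
    huniq b hb (sub_eq_zero.mp hfb)
  exact aux_root_lt hcont hf1 hroot hc.le (by simpa [hf] using sub_pos.mpr hgt)

/-- For each `n ≥ 3`, let `a1 n` be the unique positive real solution of
`a = 2a⁻¹ + ∑_{i=2}^{n-2} a^{-i}`, and `a2 n` the unique positive real solution of
`a = 1 - a⁻¹ + a^{-(n-2)} + ∑_{i=1}^{n-2} a^{-i}` (both lie in `(1,∞)`).  Then
`a1 n < a2 n` for `n ∈ {3,4,5}`, and `a2 n < a1 n` for every `n ≥ 6`. -/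
theorem comparison_of_roots (a1 a2 : ℕ → ℝ)
    (h1gt : ∀ n, 3 ≤ n → 1 < a1 n)
    (h1eq : ∀ n, 3 ≤ n →
      a1 n = 2 * (a1 n)⁻¹ + ∑ i ∈ Finset.Icc 2 (n - 2), (a1 n)⁻¹ ^ i)
    (h1uniq : ∀ n, 3 ≤ n → ∀ b : ℝ, 0 < b →
      b = 2 * b⁻¹ + ∑ i ∈ Finset.Icc 2 (n - 2), b⁻¹ ^ i → b = a1 n)
    (h2gt : ∀ n, 3 ≤ n → 1 < a2 n)
    (h2eq : ∀ n, 3 ≤ n →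
      a2 n = 1 - (a2 n)⁻¹ + (a2 n)⁻¹ ^ (n - 2) + ∑ i ∈ Finset.Icc 1 (n - 2), (a2 n)⁻¹ ^ i)
    (h2uniq : ∀ n, 3 ≤ n → ∀ b : ℝ, 0 < b →
      b = 1 - b⁻¹ + b⁻¹ ^ (n - 2) + ∑ i ∈ Finset.Icc 1 (n - 2), b⁻¹ ^ i → b = a2 n) :
    (∀ n, n = 3 ∨ n = 4 ∨ n = 5 → a1 n < a2 n) ∧
    (∀ n, 6 ≤ n → a2 n < a1 n) := by
  constructor
  · -- Part 1 : n ∈ {3,4,5}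
    intro n hn
    have hn3 : 3 ≤ n := by rcases hn with h | h | h <;> omega
    have hagt : 1 < a2 n := h2gt n hn3
    have ha0 : 0 < a2 n := lt_trans one_pos hagt
    have hx0 : 0 < (a2 n)⁻¹ := inv_pos.mpr ha0
    have hx1 : (a2 n)⁻¹ < 1 := inv_lt_one_of_one_lt₀ hagt
    have hax : a2 n * (a2 n)⁻¹ = 1 := mul_inv_cancel₀ (ne_of_gt ha0)
    have heq := h2eq n hn3
    apply aux1 n hn3 (a1 n) (a2 n) (h1uniq n hn3) hagt
    rcases hn with h | h | h <;> subst h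
    · norm_num at heq ⊢
      -- heq : a2 3 = 1 - (a2 3)⁻¹ + (a2 3)⁻¹ + (a2 3)⁻¹ ; goal : 2 * (a2 3)⁻¹ < a2 3
      nlinarith [heq, hx1]
    · norm_num [Finset.sum_Icc_succ_top] at heq ⊢
      simp only [← inv_pow] at heq ⊢
      nlinarith [heq, sq_nonneg (1 - (a2 4)⁻¹)]
    · norm_num [Finset.sum_Icc_succ_top] at heq ⊢
      simp only [← inv_pow] at heq ⊢
      set x := (a2 5)⁻¹ with hx
      have hrel : x + x^3 + 2*x^4 = 1 := by
        linear_combination hax - x * heq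
      nlinarith [hrel, sq_nonneg x, sq_nonneg (x - 0.6), sq_nonneg (x^2 - 0.36),
        mul_pos hx0 hx0, mul_pos (mul_pos hx0 hx0) hx0, heq]
  · -- Part 2 : n ≥ 6
    intro n hn
    have hn3 : 3 ≤ n := by omega
    have hagt : 1 < a1 n := h1gt n hn3
    have ha0 : 0 < a1 n := lt_trans one_pos hagt
    have hy0 : 0 < (a1 n)⁻¹ := inv_pos.mpr ha0
    have hy1 : (a1 n)⁻¹ < 1 := inv_lt_one_of_one_lt₀ hagt
    have hay : a1 n * (a1 n)⁻¹ = 1 := mul_inv_cancel₀ (ne_of_gt ha0)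
    have heq := h1eq n hn3
    apply aux2 n hn3 (a2 n) (a1 n) (h2uniq n hn3) hagt
    set y := (a1 n)⁻¹ with hy
    set S : ℝ := ∑ i ∈ Finset.Icc 2 (n - 2), y ^ i with hS
    -- heq : a1 n = 2 * y + S
    have hins : Finset.Icc 1 (n - 2) = insert 1 (Finset.Icc 2 (n - 2)) := by
      ext i; simp only [Finset.mem_Icc, Finset.mem_insert]; omega
    have hnotmem : (1:ℕ) ∉ Finset.Icc 2 (n - 2) := by
      simp only [Finset.mem_Icc]; omega
    have hrange : Finset.range (n - 1) = insert 0 (insert 1 (Finset.Icc 2 (n - 2))) := by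
      ext i; simp only [Finset.mem_range, Finset.mem_insert, Finset.mem_Icc]; omega
    have hnotmem0 : (0:ℕ) ∉ insert 1 (Finset.Icc 2 (n - 2)) := by
      simp only [Finset.mem_insert, Finset.mem_Icc]; omega
    have hsum : ∑ i ∈ Finset.range (n - 1), y ^ i = 1 + y + S := by
      rw [hrange, Finset.sum_insert hnotmem0, Finset.sum_insert hnotmem]
      simp only [pow_zero, pow_one, ← hS]; ring
    have hgeom := geom_sum_mul y (n - 1)
    rw [hsum] at hgeom
    -- hgeom : (1 + y + S) * (y - 1) = y^(n-1) - 1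
    have hSle : S * (1 - y) ≤ y^2 := by
      nlinarith [pow_nonneg hy0.le (n - 1), hgeom]
    have h1' : 1 = 2*y^2 + S*y := by linear_combination y * heq - hay
    have hp : 1 - y - 2*y^2 + y^3 ≤ 0 := by
      have h3 : y * (S * (1 - y)) ≤ y * y^2 :=
        mul_le_mul_of_nonneg_left hSle hy0.le
      nlinarith [h3, h1']
    have hq2 : y^3 + y^2 + y - 1 > 0 := by
      nlinarith [sq_nonneg (y - 0.55), sq_nonneg y, mul_pos hy0 hy0, sq_nonneg (y - 1), hp]
    have hy4 : y^(n-2) ≤ y^4 := pow_le_pow_of_le_one hy0.le hy1.le (by omega)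
    have hkey : 1 + y^(n-2) < 2*y := by
      nlinarith [mul_pos (sub_pos.mpr hy1) hq2, hy4]
    rw [hins, Finset.sum_insert hnotmem, heq]
    simp only [pow_one, ← hS]
    linarith [hkey]
end
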